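/- arXiv:0910.3872 — 9 statements merged into one kernel-verified Lean document; each statement's English description precedes it below -/
import Mathlib

section
/- Let n ≥ 1, let R : ℝ → Matrix (Fin n) (Fin n) ℝ be continuous with R(t) symmetric for every t, let I ⊆ ℝ be an open interval, and let Y be a Lagrangian Jacobi solution along R such that Y(t) is invertible for every t ∈ I. Then for every t₀ ∈ I and every Jacobi solution Z along R there exist constant matrices C₁, C₂ ∈ Matrix (Fin n) (Fin n) ℝ such that Z(t) = Y(t) * ((∫_{t₀}^{t} (Y(s)ᵀ * Y(s))⁻¹ ds) * C₁ + C₂) for all t ∈ I. -/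
open Matrix MeasureTheory

attribute [local instance] Matrix.normedAddCommGroup Matrix.normedSpace

namespace JacobiAux

variable {n : ℕ}

/-- The entry map as a continuous linear map. -/
noncomputable def entryCLM (i j : Fin n) : Matrix (Fin n) (Fin n) ℝ →L[ℝ] ℝ :=
  LinearMap.toContinuousLinearMap
    { toFun := fun A => A i j
      map_add' := fun _ _ => rfl
      map_smul' := fun _ _ => rfl }

theorem hasDerivAt_entry {f : ℝ → Matrix (Fin n) (Fin n) ℝ} {f' : Matrix (Fin n) (Fin n) ℝ}
    {t : ℝ} (hf : HasDerivAt f f' t) (i j : Fin n) :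
    HasDerivAt (fun s => f s i j) (f' i j) t :=
  (entryCLM i j).hasFDerivAt.comp_hasDerivAt t hf

theorem differentiableAt_entry {f : ℝ → Matrix (Fin n) (Fin n) ℝ} {t : ℝ}
    (hf : DifferentiableAt ℝ f t) (i j : Fin n) :
    DifferentiableAt ℝ (fun s => f s i j) t :=
  (hasDerivAt_entry hf.hasDerivAt i j).differentiableAt

theorem differentiableAt_matrix {f : ℝ → Matrix (Fin n) (Fin n) ℝ} {t : ℝ}
    (h : ∀ i j, DifferentiableAt ℝ (fun s => f s i j) t) :
    DifferentiableAt ℝ f t :=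
  differentiableAt_pi.mpr fun i => differentiableAt_pi.mpr fun j => h i j

/-- Matrix multiplication as a continuous bilinear map. -/
noncomputable def mulCLM : Matrix (Fin n) (Fin n) ℝ →L[ℝ] Matrix (Fin n) (Fin n) ℝ →L[ℝ]
    Matrix (Fin n) (Fin n) ℝ :=
  LinearMap.toContinuousLinearMap
    { toFun := fun A => LinearMap.toContinuousLinearMap (LinearMap.mulLeft ℝ A)
      map_add' := by
        intro A B
        ext C
        simp [LinearMap.mulLeft_apply, add_mul]
      map_smul' := by
        intro c A
        ext C
        simp [LinearMap.mulLeft_apply, smul_mul_assoc] }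

@[simp] theorem mulCLM_apply (A B : Matrix (Fin n) (Fin n) ℝ) : mulCLM A B = A * B := rfl

theorem isBoundedBilinearMap_mul :
    IsBoundedBilinearMap ℝ (fun p : Matrix (Fin n) (Fin n) ℝ × Matrix (Fin n) (Fin n) ℝ =>
      p.1 * p.2) := by
  have h := (mulCLM (n := n)).isBoundedBilinearMap
  exact h

theorem hasDerivAt_matMul {f g : ℝ → Matrix (Fin n) (Fin n) ℝ}
    {f' g' : Matrix (Fin n) (Fin n) ℝ} {t : ℝ}
    (hf : HasDerivAt f f' t) (hg : HasDerivAt g g' t) :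
    HasDerivAt (fun s => f s * g s) (f' * g t + f t * g') t := by
  have h := (isBoundedBilinearMap_mul.hasFDerivAt (f t, g t)).comp_hasDerivAt t (hf.prodMk hg)
  simp only [isBoundedBilinearMap_mul.deriv_apply, add_comm] at h
  exact h

/-- Transpose as a continuous linear map. -/
noncomputable def transposeCLM : Matrix (Fin n) (Fin n) ℝ →L[ℝ] Matrix (Fin n) (Fin n) ℝ :=
  LinearMap.toContinuousLinearMap
    { toFun := fun A => Aᵀ
      map_add' := fun _ _ => Matrix.transpose_add _ _
      map_smul' := fun _ _ => Matrix.transpose_smul _ _ }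

theorem hasDerivAt_matTranspose {f : ℝ → Matrix (Fin n) (Fin n) ℝ}
    {f' : Matrix (Fin n) (Fin n) ℝ} {t : ℝ} (hf : HasDerivAt f f' t) :
    HasDerivAt (fun s => (f s)ᵀ) f'ᵀ t :=
  (transposeCLM (n := n)).hasFDerivAt.comp_hasDerivAt t hf

theorem differentiableAt_det {f : ℝ → Matrix (Fin n) (Fin n) ℝ} {t : ℝ}
    (hf : DifferentiableAt ℝ f t) :
    DifferentiableAt ℝ (fun s => (f s).det) t := by
  have h : (fun s => (f s).det) = fun s =>
      ∑ σ : Equiv.Perm (Fin n), (Equiv.Perm.sign σ : ℝ) * ∏ i, f s (σ i) i := by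
    funext s
    rw [Matrix.det_apply']
  rw [h]
  refine DifferentiableAt.fun_sum fun σ _ => DifferentiableAt.const_mul ?_ _
  exact DifferentiableAt.fun_finsetProd fun i _ => differentiableAt_entry hf _ _

theorem differentiableAt_adjugate {f : ℝ → Matrix (Fin n) (Fin n) ℝ} {t : ℝ}
    (hf : DifferentiableAt ℝ f t) :
    DifferentiableAt ℝ (fun s => (f s).adjugate) t := by
  refine differentiableAt_matrix fun i j => ?_
  have h : (fun s => (f s).adjugate i j)
      = fun s => ((f s).updateRow j (Pi.single i 1)).det := by
    funext s
    rw [Matrix.adjugate_apply]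
  rw [h]
  refine differentiableAt_det (differentiableAt_matrix fun a b => ?_)
  have h2 : (fun s => (f s).updateRow j (Pi.single i 1) a b)
      = fun s => (if a = j then (Pi.single i (1:ℝ) : Fin n → ℝ) b else f s a b) := by
    funext s
    rw [Matrix.updateRow_apply]
  rw [h2]
  by_cases hab : a = j
  · simp [hab]
  · simp only [hab, if_false]
    exact differentiableAt_entry hf _ _

theorem differentiableAt_matinv {f : ℝ → Matrix (Fin n) (Fin n) ℝ} {t : ℝ}
    (hf : DifferentiableAt ℝ f t) (h : IsUnit (f t)) :
    DifferentiableAt ℝ (fun s => (f s)⁻¹) t := by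
  have hdet : (f t).det ≠ 0 := (Matrix.isUnit_iff_isUnit_det _ |>.mp h).ne_zero
  have heq : (fun s => (f s)⁻¹) = fun s => ((f s).det)⁻¹ • (f s).adjugate := by
    funext s
    rw [Matrix.inv_def, Ring.inverse_eq_inv]
  rw [heq]
  exact ((differentiableAt_det hf).inv hdet).smul (differentiableAt_adjugate hf)

theorem hasDerivAt_matinv {f : ℝ → Matrix (Fin n) (Fin n) ℝ}
    {f' : Matrix (Fin n) (Fin n) ℝ} {t : ℝ}
    (hf : HasDerivAt f f' t) (h : ∀ᶠ s in nhds t, IsUnit (f s)) :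
    HasDerivAt (fun s => (f s)⁻¹) (-((f t)⁻¹ * f' * (f t)⁻¹)) t := by
  have hut : IsUnit (f t) := h.self_of_nhds
  have hdet : IsUnit (f t).det := (Matrix.isUnit_iff_isUnit_det _).mp hut
  have hV : DifferentiableAt ℝ (fun s => (f s)⁻¹) t :=
    differentiableAt_matinv hf.differentiableAt hut
  set V' := deriv (fun s => (f s)⁻¹) t with hV'
  have hVd : HasDerivAt (fun s => (f s)⁻¹) V' t := hV.hasDerivAt
  have h1 : HasDerivAt (fun s => (f s)⁻¹ * f s) (V' * f t + (f t)⁻¹ * f') t :=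
    hasDerivAt_matMul hVd hf
  have heq : (fun s => (f s)⁻¹ * f s) =ᶠ[nhds t] fun _ => (1 : Matrix (Fin n) (Fin n) ℝ) := by
    filter_upwards [h] with s hs
    exact Matrix.nonsing_inv_mul _ ((Matrix.isUnit_iff_isUnit_det _).mp hs)
  have h2 : HasDerivAt (fun _ : ℝ => (1 : Matrix (Fin n) (Fin n) ℝ))
      (V' * f t + (f t)⁻¹ * f') t := h1.congr_of_eventuallyEq heq.symm
  have h3 : V' * f t + (f t)⁻¹ * f' = 0 := by
    have := h2.unique (hasDerivAt_const t 1)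
    simpa using this
  have h4 : V' * f t = -((f t)⁻¹ * f') := by
    rw [eq_neg_iff_add_eq_zero]
    exact h3
  have h5 : V' = -((f t)⁻¹ * f' * (f t)⁻¹) := by
    have h6 : V' * f t * (f t)⁻¹ = -((f t)⁻¹ * f') * (f t)⁻¹ := by rw [h4]
    rwa [Matrix.mul_nonsing_inv_cancel_right _ _ hdet, neg_mul] at h6
  rw [← h5]
  exact hVd

theorem key_alg {A A' Zt Zt' : Matrix (Fin n) (Fin n) ℝ} (hA : IsUnit A.det)
    (hL : A'ᵀ * A = Aᵀ * A') :
    -(A⁻¹ * A' * A⁻¹) * Zt + A⁻¹ * Zt' - (Aᵀ * A)⁻¹ * (Aᵀ * Zt' - A'ᵀ * Zt) = 0 := by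
  have hinv : Invertible A := A.invertibleOfIsUnitDet hA
  have hinvT : Invertible Aᵀ := (Matrix.transposeInvertibleEquivInvertible A).symm hinv
  have hrev : (Aᵀ * A)⁻¹ = A⁻¹ * (Aᵀ)⁻¹ := Matrix.mul_inv_rev _ _
  have hkey : (Aᵀ)⁻¹ * A'ᵀ = A' * A⁻¹ := by
    have h1 := congrArg (fun X => (Aᵀ)⁻¹ * X * A⁻¹) hL
    simpa [Matrix.mul_assoc] using h1
  have hkey2 : ∀ B, (Aᵀ)⁻¹ * (A'ᵀ * B) = A' * (A⁻¹ * B) := by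
    intro B
    rw [← Matrix.mul_assoc, hkey, Matrix.mul_assoc]
  rw [hrev, Matrix.mul_sub]
  simp only [Matrix.mul_assoc, hkey2, Matrix.inv_mul_cancel_left_of_invertible, Matrix.neg_mul]
  abel

end JacobiAux

open JacobiAux

/-- A Jacobi solution along `R`: a twice continuously differentiable matrix-valued
map `Y` satisfying `Y'' + R Y = 0`. -/
def IsJacobi {n : ℕ} (R Y : ℝ → Matrix (Fin n) (Fin n) ℝ) : Prop :=
  ContDiff ℝ 2 Y ∧ ∀ t : ℝ, deriv (deriv Y) t + R t * Y t = 0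

/-- A Lagrangian (self-conjugate) solution: the Wronskian `W(Y,Y)` vanishes. -/
def IsLagrangian {n : ℕ} (Y : ℝ → Matrix (Fin n) (Fin n) ℝ) : Prop :=
  ∀ t : ℝ, (deriv Y t)ᵀ * Y t = (Y t)ᵀ * deriv Y t

/-- Any Jacobi solution `Z` can be expressed via a nonsingular Lagrangian Jacobi
solution `Y` as `Z(t) = Y(t) ((∫_{t₀}^t (YᵀY)⁻¹) C₁ + C₂)` on an open interval. -/
theorem jacobi_representation {n : ℕ} (hn : 1 ≤ n)
    (R : ℝ → Matrix (Fin n) (Fin n) ℝ) (hRc : Continuous R)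
    (hRsym : ∀ t : ℝ, (R t)ᵀ = R t)
    (I : Set ℝ) (hIopen : IsOpen I) (hIconv : Convex ℝ I)
    (Y : ℝ → Matrix (Fin n) (Fin n) ℝ)
    (hY : IsJacobi R Y) (hYL : IsLagrangian Y)
    (hYinv : ∀ t ∈ I, IsUnit (Y t)) :
    ∀ t₀ ∈ I, ∀ Z : ℝ → Matrix (Fin n) (Fin n) ℝ, IsJacobi R Z →
      ∃ C₁ C₂ : Matrix (Fin n) (Fin n) ℝ, ∀ t ∈ I,
        Z t = Y t * ((∫ s in t₀..t, ((Y s)ᵀ * Y s)⁻¹) * C₁ + C₂) := by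
  intro t₀ ht₀ Z hZ
  obtain ⟨hYc, hYeq⟩ := hY
  obtain ⟨hZc, hZeq⟩ := hZ
  have h21 : (2 : WithTop ℕ∞) = 1 + 1 := by norm_num
  -- basic differentiability
  have hYd : Differentiable ℝ Y := hYc.differentiable (by norm_num)
  have hYd' : Differentiable ℝ (deriv Y) := by
    have h := (contDiff_succ_iff_deriv.mp (h21 ▸ hYc)).2.2
    exact h.differentiable one_ne_zero
  have hZd : Differentiable ℝ Z := hZc.differentiable (by norm_num)
  have hZd' : Differentiable ℝ (deriv Z) := by
    have h := (contDiff_succ_iff_deriv.mp (h21 ▸ hZc)).2.2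
    exact h.differentiable one_ne_zero
  have hY'' : ∀ s, deriv (deriv Y) s = -(R s * Y s) := fun s =>
    eq_neg_of_add_eq_zero_left (hYeq s)
  have hZ'' : ∀ s, deriv (deriv Z) s = -(R s * Z s) := fun s =>
    eq_neg_of_add_eq_zero_left (hZeq s)
  -- the Wronskian is constant
  set W : ℝ → Matrix (Fin n) (Fin n) ℝ :=
    fun s => (Y s)ᵀ * deriv Z s - (deriv Y s)ᵀ * Z s with hWdef
  have hWderiv : ∀ s, HasDerivAt W 0 s := by
    intro s
    have h1 : HasDerivAt (fun u => (Y u)ᵀ * deriv Z u)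
        ((deriv Y s)ᵀ * deriv Z s + (Y s)ᵀ * deriv (deriv Z) s) s :=
      hasDerivAt_matMul (hasDerivAt_matTranspose (hYd s).hasDerivAt) (hZd' s).hasDerivAt
    have h2 : HasDerivAt (fun u => (deriv Y u)ᵀ * Z u)
        ((deriv (deriv Y) s)ᵀ * Z s + (deriv Y s)ᵀ * deriv Z s) s :=
      hasDerivAt_matMul (hasDerivAt_matTranspose (hYd' s).hasDerivAt) (hZd s).hasDerivAt
    have h3 := h1.sub h2
    have hval : (deriv Y s)ᵀ * deriv Z s + (Y s)ᵀ * deriv (deriv Z) s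
        - ((deriv (deriv Y) s)ᵀ * Z s + (deriv Y s)ᵀ * deriv Z s) = 0 := by
      rw [hY'' s, hZ'' s, Matrix.transpose_neg, Matrix.transpose_mul, hRsym s]
      simp only [Matrix.mul_neg, Matrix.neg_mul, Matrix.mul_assoc]
      abel
    rw [hval] at h3
    rw [hWdef]
    exact h3
  have hWconst : ∀ s, W s = W t₀ := fun s =>
    is_const_of_deriv_eq_zero (fun u => (hWderiv u).differentiableAt)
      (fun u => (hWderiv u).deriv) s t₀
  set C₁ : Matrix (Fin n) (Fin n) ℝ := W t₀ with hC₁def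
  set C₂ : Matrix (Fin n) (Fin n) ℝ := (Y t₀)⁻¹ * Z t₀ with hC₂def
  refine ⟨C₁, C₂, ?_⟩
  -- integrand
  set f : ℝ → Matrix (Fin n) (Fin n) ℝ := fun s => ((Y s)ᵀ * Y s)⁻¹ with hfdef
  have hQd : ∀ s, DifferentiableAt ℝ (fun u => (Y u)ᵀ * Y u) s := fun s =>
    (hasDerivAt_matMul (hasDerivAt_matTranspose (hYd s).hasDerivAt) (hYd s).hasDerivAt).differentiableAt
  have hQu : ∀ s ∈ I, IsUnit ((Y s)ᵀ * Y s) := by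
    intro s hs
    have hd : IsUnit (Y s).det := (Matrix.isUnit_iff_isUnit_det _).mp (hYinv s hs)
    rw [Matrix.isUnit_iff_isUnit_det, Matrix.det_mul, Matrix.det_transpose]
    exact hd.mul hd
  have hfd : ∀ s ∈ I, DifferentiableAt ℝ f s := fun s hs =>
    differentiableAt_matinv (hQd s) (hQu s hs)
  have hfc : ContinuousOn f I := fun s hs => ((hfd s hs).continuousAt).continuousWithinAt
  set g : ℝ → Matrix (Fin n) (Fin n) ℝ := fun u => ∫ s in t₀..u, f s with hgdef
  have hg : ∀ t ∈ I, HasDerivAt g (f t) t := by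
    intro t ht
    have hsub : Set.uIcc t₀ t ⊆ I := hIconv.ordConnected.uIcc_subset ht₀ ht
    letI : TopologicalSpace (Matrix (Fin n) (Fin n) ℝ) := PseudoMetricSpace.toUniformSpace.toTopologicalSpace
    have hint : IntervalIntegrable f volume t₀ t := (hfc.mono hsub).intervalIntegrable
    exact intervalIntegral.integral_hasDerivAt_right hint
      (ContinuousOn.stronglyMeasurableAtFilter (β := Matrix (Fin n) (Fin n) ℝ) hIopen (by exact hfc) t ht) (hfd t ht).continuousAt
  -- the function φ
  set φ : ℝ → Matrix (Fin n) (Fin n) ℝ := fun u => (Y u)⁻¹ * Z u - g u * C₁ with hφdef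
  have hφ : ∀ t ∈ I, HasDerivAt φ 0 t := by
    intro t ht
    have hdet : IsUnit (Y t).det := (Matrix.isUnit_iff_isUnit_det _).mp (hYinv t ht)
    have hVt : HasDerivAt (fun u => (Y u)⁻¹) (-((Y t)⁻¹ * deriv Y t * (Y t)⁻¹)) t :=
      hasDerivAt_matinv (hYd t).hasDerivAt
        (Filter.eventually_of_mem (hIopen.mem_nhds ht) hYinv)
    have hE : HasDerivAt (fun u => (Y u)⁻¹ * Z u)
        (-((Y t)⁻¹ * deriv Y t * (Y t)⁻¹) * Z t + (Y t)⁻¹ * deriv Z t) t :=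
      hasDerivAt_matMul hVt (hZd t).hasDerivAt
    have hgC : HasDerivAt (fun u => g u * C₁) (f t * C₁) t := by
      have h := hasDerivAt_matMul (hg t ht) (hasDerivAt_const t C₁)
      simpa using h
    have h := hE.sub hgC
    have hC : C₁ = (Y t)ᵀ * deriv Z t - (deriv Y t)ᵀ * Z t := (hWconst t).symm
    have hval : -((Y t)⁻¹ * deriv Y t * (Y t)⁻¹) * Z t + (Y t)⁻¹ * deriv Z t - f t * C₁ = 0 := by
      rw [hC]
      simp only [hfdef]
      exact key_alg hdet (hYL t)
    rw [hval] at h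
    rw [hφdef]
    exact h
  -- φ is constant on I
  have hφconst : ∀ t ∈ I, φ t = φ t₀ := by
    intro t ht
    refine hIconv.is_const_of_fderivWithin_eq_zero
      (fun s hs => (hφ s hs).differentiableAt.differentiableWithinAt) (fun s hs => ?_) ht ht₀
    rw [fderivWithin_of_isOpen hIopen hs]
    erw [(hφ s hs).hasFDerivAt.fderiv]
    ext x
    simp
    rfl
  -- conclusion
  intro t ht
  have hdet : IsUnit (Y t).det := (Matrix.isUnit_iff_isUnit_det _).mp (hYinv t ht)
  have h0 : φ t₀ = C₂ := by
    simp only [hφdef, hgdef, intervalIntegral.integral_same, Matrix.zero_mul, sub_zero, hC₂def]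
  have h1 : φ t = C₂ := (hφconst t ht).trans h0
  simp only [hφdef] at h1
  have h2 : (Y t)⁻¹ * Z t = C₂ + g t * C₁ := sub_eq_iff_eq_add.mp h1
  have h3 : Z t = Y t * (g t * C₁ + C₂) := by
    calc Z t = Y t * ((Y t)⁻¹ * Z t) := (Matrix.mul_nonsing_inv_cancel_left _ _ hdet).symm
      _ = Y t * (g t * C₁ + C₂) := by rw [h2, add_comm]
  exact h3
end

section
/- Let n ≥ 1, let R : ℝ → Matrix (Fin n) (Fin n) ℝ be continuous with R(t) symmetric for every t, and let s > 0. Let U be a Lagrangian Jacobi solution along R with U(0) = 1 such that U(u) is invertible for every u ∈ [0, s], and let S be a Jacobi solution along R with S(0) = 1 and S(s) = 0. Then the matrix U'(0) − S'(0) is invertible and (U'(0) − S'(0))⁻¹ = ∫₀^{s} (U(u)ᵀ * U(u))⁻¹ du. -/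
open Matrix MeasureTheory

attribute [local instance] Matrix.normedAddCommGroup Matrix.normedSpace

section Helpers

variable {n : ℕ}

lemma hde_entry {f : ℝ → Matrix (Fin n) (Fin n) ℝ} {f' : Matrix (Fin n) (Fin n) ℝ} {t : ℝ}
    (hf : HasDerivAt f f' t) (i j : Fin n) :
    HasDerivAt (fun t => f t i j) (f' i j) t :=
  hasDerivAt_pi.1 (hasDerivAt_pi.1 hf i) j

lemma hde_of_entries {f : ℝ → Matrix (Fin n) (Fin n) ℝ} {f' : Matrix (Fin n) (Fin n) ℝ} {t : ℝ}
    (hf : ∀ i j, HasDerivAt (fun t => f t i j) (f' i j) t) :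
    HasDerivAt f f' t :=
  hasDerivAt_pi.2 fun i => hasDerivAt_pi.2 fun j => hf i j

lemma hde_mul {f g : ℝ → Matrix (Fin n) (Fin n) ℝ} {f' g' : Matrix (Fin n) (Fin n) ℝ} {t : ℝ}
    (hf : HasDerivAt f f' t) (hg : HasDerivAt g g' t) :
    HasDerivAt (fun t => f t * g t) (f' * g t + f t * g') t := by
  apply hde_of_entries
  intro i j
  simp only [Matrix.add_apply, Matrix.mul_apply]
  exact HasDerivAt.congr_deriv
    (HasDerivAt.fun_sum fun k _ => ((hde_entry hf i k).mul (hde_entry hg k j)))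
    (by rw [Finset.sum_add_distrib])

lemma hde_transpose {f : ℝ → Matrix (Fin n) (Fin n) ℝ} {f' : Matrix (Fin n) (Fin n) ℝ} {t : ℝ}
    (hf : HasDerivAt f f' t) : HasDerivAt (fun t => (f t)ᵀ) f'ᵀ t :=
  hde_of_entries fun i j => hde_entry hf j i

lemma diffAt_entries {f : ℝ → Matrix (Fin n) (Fin n) ℝ} {t : ℝ}
    (hf : ∀ i j, DifferentiableAt ℝ (fun t => f t i j) t) : DifferentiableAt ℝ f t :=
  differentiableAt_pi.2 fun i => differentiableAt_pi.2 fun j => hf i j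

lemma diff_det {f : ℝ → Matrix (Fin n) (Fin n) ℝ} {t : ℝ}
    (hf : ∀ i j, DifferentiableAt ℝ (fun t => f t i j) t) :
    DifferentiableAt ℝ (fun t => (f t).det) t := by
  simp only [Matrix.det_apply, Units.smul_def, zsmul_eq_mul]
  exact DifferentiableAt.fun_sum fun σ _ =>
    (differentiableAt_const _).mul (DifferentiableAt.fun_finsetProd fun i _ => hf (σ i) i)

lemma diff_adjugate {f : ℝ → Matrix (Fin n) (Fin n) ℝ} {t : ℝ}
    (hf : ∀ i j, DifferentiableAt ℝ (fun t => f t i j) t) (i j : Fin n) :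
    DifferentiableAt ℝ (fun t => (f t).adjugate i j) t := by
  simp only [Matrix.adjugate_apply]
  apply diff_det
  intro a b
  by_cases h : a = j
  · subst h; simp only [Matrix.updateRow_self]; exact differentiableAt_const _
  · simp only [Matrix.updateRow_ne h]; exact hf a b

lemma diff_inv {f : ℝ → Matrix (Fin n) (Fin n) ℝ} {t : ℝ}
    (hf : DifferentiableAt ℝ f t) (hdet : (f t).det ≠ 0) :
    DifferentiableAt ℝ (fun t => (f t)⁻¹) t := by
  have he : ∀ i j, DifferentiableAt ℝ (fun t => f t i j) t := fun i j =>
    (hde_entry hf.hasDerivAt i j).differentiableAt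
  apply diffAt_entries
  intro i j
  have : ∀ u, (f u)⁻¹ i j = ((f u).det)⁻¹ * (f u).adjugate i j := by
    intro u
    rw [Matrix.inv_def, Matrix.smul_apply, Ring.inverse_eq_inv', smul_eq_mul]
  simp only [this]
  exact ((diff_det he).inv hdet).mul (diff_adjugate he i j)

end Helpers

/-- `(U'(0) − S'(0))⁻¹ = ∫₀ˢ (UᵀU)⁻¹(u) du` for a nonsingular Lagrangian solution `U`
with `U(0) = 1` and the Jacobi solution `S` with `S(0) = 1`, `S(s) = 0`. -/
theorem inv_deriv_diff_eq_integral {n : ℕ} (hn : 1 ≤ n)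
    (R : ℝ → Matrix (Fin n) (Fin n) ℝ) (hRc : Continuous R)
    (hRsym : ∀ t : ℝ, (R t)ᵀ = R t)
    (s : ℝ) (hs : 0 < s)
    (U : ℝ → Matrix (Fin n) (Fin n) ℝ)
    (hU : IsJacobi R U) (hUL : IsLagrangian U) (hU0 : U 0 = 1)
    (hUinv : ∀ u ∈ Set.Icc (0 : ℝ) s, IsUnit (U u))
    (S : ℝ → Matrix (Fin n) (Fin n) ℝ)
    (hS : IsJacobi R S) (hS0 : S 0 = 1) (hSs : S s = 0) :
    IsUnit (deriv U 0 - deriv S 0) ∧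
      (deriv U 0 - deriv S 0)⁻¹ = ∫ u in (0 : ℝ)..s, ((U u)ᵀ * U u)⁻¹ := by
  obtain ⟨hU2, hUeq⟩ := hU
  obtain ⟨hS2, hSeq⟩ := hS
  -- basic differentiability
  have hUD : Differentiable ℝ U := hU2.differentiable two_ne_zero
  have hSD : Differentiable ℝ S := hS2.differentiable two_ne_zero
  have hU'D : Differentiable ℝ (deriv U) := by
    have h2 : ContDiff ℝ (1 + 1) U := by rw [one_add_one_eq_two]; exact hU2
    exact ((contDiff_succ_iff_deriv.1 h2).2.2).differentiable one_ne_zero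
  have hS'D : Differentiable ℝ (deriv S) := by
    have h2 : ContDiff ℝ (1 + 1) S := by rw [one_add_one_eq_two]; exact hS2
    exact ((contDiff_succ_iff_deriv.1 h2).2.2).differentiable one_ne_zero
  have hU'' : ∀ t, deriv (deriv U) t = -(R t * U t) := fun t =>
    eq_neg_of_add_eq_zero_left (hUeq t)
  have hS'' : ∀ t, deriv (deriv S) t = -(R t * S t) := fun t =>
    eq_neg_of_add_eq_zero_left (hSeq t)
  -- the Wronskian is constant
  set Wf : ℝ → Matrix (Fin n) (Fin n) ℝ :=
    fun t => (deriv U t)ᵀ * S t - (U t)ᵀ * deriv S t with hWf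
  have hWd : ∀ t, HasDerivAt Wf 0 t := by
    intro t
    have h1 : HasDerivAt (fun t => (deriv U t)ᵀ * S t)
        ((deriv (deriv U) t)ᵀ * S t + (deriv U t)ᵀ * deriv S t) t :=
      hde_mul (hde_transpose (hU'D t).hasDerivAt) (hSD t).hasDerivAt
    have h2 : HasDerivAt (fun t => (U t)ᵀ * deriv S t)
        ((deriv U t)ᵀ * deriv S t + (U t)ᵀ * deriv (deriv S) t) t :=
      hde_mul (hde_transpose (hUD t).hasDerivAt) (hS'D t).hasDerivAt
    have h3 := h1.sub h2
    have hz : (deriv (deriv U) t)ᵀ * S t + (deriv U t)ᵀ * deriv S t -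
        ((deriv U t)ᵀ * deriv S t + (U t)ᵀ * deriv (deriv S) t) = 0 := by
      rw [hU'' t, hS'' t, Matrix.transpose_neg, Matrix.transpose_mul, hRsym]
      simp [Matrix.mul_assoc]
      abel
    rwa [hz] at h3
  set D : Matrix (Fin n) (Fin n) ℝ := deriv U 0 - deriv S 0 with hD
  have hU'0sym : (deriv U 0)ᵀ = deriv U 0 := by
    have := hUL 0
    rwa [hU0, Matrix.transpose_one, mul_one, one_mul] at this
  have hWconst : ∀ t, Wf t = D := by
    intro t
    have hconst : Wf t = Wf 0 :=
      is_const_of_deriv_eq_zero (fun x => (hWd x).differentiableAt)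
        (fun x => (hWd x).deriv) t 0
    rw [hconst, hWf]
    simp only [hU0, hS0, Matrix.transpose_one, mul_one, one_mul, hU'0sym, hD]
  -- the open set where U is invertible
  have hdetd : Differentiable ℝ fun t => (U t).det := fun t =>
    diff_det fun i j => (hde_entry (hUD t).hasDerivAt i j).differentiableAt
  have hdetc : Continuous fun t => (U t).det := hdetd.continuous
  set O : Set ℝ := {t | (U t).det ≠ 0} with hO
  have hOopen : IsOpen O := isOpen_compl_singleton.preimage hdetc
  have hsub : Set.Icc (0 : ℝ) s ⊆ O := fun u hu =>
    (Matrix.isUnit_iff_isUnit_det _).1 (hUinv u hu) |>.ne_zero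
  have hdetAt : ∀ t ∈ O, (U t).det ≠ 0 := fun t ht => ht
  -- G = U⁻¹ S
  set G : ℝ → Matrix (Fin n) (Fin n) ℝ := fun t => (U t)⁻¹ * S t with hG
  have hinvdiff : ∀ t ∈ O, DifferentiableAt ℝ (fun u => (U u)⁻¹) t := fun t ht =>
    diff_inv (hUD t) ht
  have hGdiff : ∀ t ∈ O, DifferentiableAt ℝ G t := fun t ht =>
    (hde_mul ((hinvdiff t ht).hasDerivAt) (hSD t).hasDerivAt).differentiableAt
  have hGderiv : ∀ t ∈ O, HasDerivAt G (-(((U t)ᵀ * U t)⁻¹ * D)) t := by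
    intro t ht
    have hdet : (U t).det ≠ 0 := ht
    have hUU : IsUnit (U t).det := isUnit_iff_ne_zero.2 hdet
    have hGd : HasDerivAt G (deriv G t) t := (hGdiff t ht).hasDerivAt
    have hUG : HasDerivAt (fun u => U u * G u)
        (deriv U t * G t + U t * deriv G t) t := hde_mul (hUD t).hasDerivAt hGd
    have hev : (fun u => U u * G u) =ᶠ[nhds t] S := by
      filter_upwards [hOopen.mem_nhds ht] with u hu
      rw [hG]
      rw [← Matrix.mul_assoc, Matrix.mul_nonsing_inv _ (isUnit_iff_ne_zero.2 hu), one_mul]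
    have hS' : HasDerivAt S (deriv U t * G t + U t * deriv G t) t :=
      hUG.congr_of_eventuallyEq hev.symm
    have heq : deriv U t * G t + U t * deriv G t = deriv S t :=
      hS'.unique (hSD t).hasDerivAt
    have heq2 : U t * deriv G t = deriv S t - deriv U t * G t := by
      rw [← heq]; abel
    have hderivG : deriv G t = (U t)⁻¹ * (deriv S t - deriv U t * G t) := by
      rw [← heq2, ← Matrix.mul_assoc, Matrix.nonsing_inv_mul _ hUU, one_mul]
    -- Lagrangian identity
    have hLag : ((U t)ᵀ)⁻¹ * (deriv U t)ᵀ = deriv U t * (U t)⁻¹ := by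
      have h := hUL t
      have hUtdet : ((U t)ᵀ).det ≠ 0 := by rwa [Matrix.det_transpose]
      calc ((U t)ᵀ)⁻¹ * (deriv U t)ᵀ
          = ((U t)ᵀ)⁻¹ * (deriv U t)ᵀ * (U t * (U t)⁻¹) := by
            rw [Matrix.mul_nonsing_inv _ hUU, mul_one]
        _ = ((U t)ᵀ)⁻¹ * ((deriv U t)ᵀ * U t) * (U t)⁻¹ := by
            rw [Matrix.mul_assoc, Matrix.mul_assoc, Matrix.mul_assoc]
        _ = ((U t)ᵀ)⁻¹ * ((U t)ᵀ * deriv U t) * (U t)⁻¹ := by rw [h]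
        _ = deriv U t * (U t)⁻¹ := by
            rw [← Matrix.mul_assoc,
              Matrix.nonsing_inv_mul _ (isUnit_iff_ne_zero.2 hUtdet), one_mul]
    have hval : -(((U t)ᵀ * U t)⁻¹ * D) = (U t)⁻¹ * (deriv S t - deriv U t * G t) := by
      rw [← hWconst t, hWf, Matrix.mul_inv_rev, hG]
      simp only [Matrix.mul_sub, Matrix.sub_mul, Matrix.mul_assoc]
      rw [← Matrix.mul_assoc (((U t)ᵀ)⁻¹) ((deriv U t)ᵀ) (S t)]
      rw [hLag]
      rw [neg_sub]
      congr 1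
      · rw [← Matrix.mul_assoc ((U t)ᵀ)⁻¹, Matrix.nonsing_inv_mul _
          (isUnit_iff_ne_zero.2 (by rwa [Matrix.det_transpose] : ((U t)ᵀ).det ≠ 0)), one_mul]
      · rw [Matrix.mul_assoc]
    rw [hval, ← hderivG]
    exact hGd
  -- continuity of the integrand on [0,s]
  have hfdiff : ∀ t ∈ O, DifferentiableAt ℝ (fun u => ((U u)ᵀ * U u)⁻¹) t := by
    intro t ht
    refine diff_inv ?_ ?_
    · exact (hde_mul (hde_transpose (hUD t).hasDerivAt) (hUD t).hasDerivAt).differentiableAt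
    · rw [Matrix.det_mul, Matrix.det_transpose]
      exact mul_ne_zero ht ht
  have hfcont : ContinuousOn (fun u => ((U u)ᵀ * U u)⁻¹) (Set.Icc (0:ℝ) s) := fun t ht =>
    ((hfdiff t (hsub ht)).continuousAt).continuousWithinAt
  letI : ENormedAddMonoid (Matrix (Fin n) (Fin n) ℝ) :=
    NormedAddCommGroup.toENormedAddCommMonoid.toENormedAddMonoid
  have hintg : IntervalIntegrable (fun u => ((U u)ᵀ * U u)⁻¹) volume 0 s := by
    apply ContinuousOn.intervalIntegrable
    rwa [Set.uIcc_of_le hs.le]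
  -- right multiplication by D as a CLM
  let L : Matrix (Fin n) (Fin n) ℝ →L[ℝ] Matrix (Fin n) (Fin n) ℝ :=
    LinearMap.toContinuousLinearMap (LinearMap.mulRight ℝ D)
  have hintg2 : IntervalIntegrable (fun u => ((U u)ᵀ * U u)⁻¹ * D) volume 0 s := by
    apply ContinuousOn.intervalIntegrable
    rw [Set.uIcc_of_le hs.le]
    exact (L.continuous.comp_continuousOn hfcont)
  -- FTC
  have hftc : ∫ u in (0:ℝ)..s, -(((U u)ᵀ * U u)⁻¹ * D) = G s - G 0 := by
    apply intervalIntegral.integral_eq_sub_of_hasDerivAt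
    · intro t ht
      rw [Set.uIcc_of_le hs.le] at ht
      exact hGderiv t (hsub ht)
    · exact hintg2.neg
  have hG0 : G 0 = 1 := by rw [hG]; simp [hU0, hS0]
  have hGs : G s = 0 := by rw [hG]; simp [hSs]
  rw [hG0, hGs, intervalIntegral.integral_neg, zero_sub, neg_inj] at hftc
  -- pull out D
  have hLint : (∫ u in (0:ℝ)..s, ((U u)ᵀ * U u)⁻¹) * D = 1 := by
    have := L.intervalIntegral_comp_comm hintg
    simp only [L, LinearMap.toContinuousLinearMap, LinearEquiv.coe_mk] at this
    rw [← hftc]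
    calc (∫ u in (0:ℝ)..s, ((U u)ᵀ * U u)⁻¹) * D
        = L (∫ u in (0:ℝ)..s, ((U u)ᵀ * U u)⁻¹) := rfl
      _ = ∫ u in (0:ℝ)..s, L (((U u)ᵀ * U u)⁻¹) := (L.intervalIntegral_comp_comm hintg).symm
      _ = ∫ u in (0:ℝ)..s, ((U u)ᵀ * U u)⁻¹ * D := rfl
  have hDL : D * (∫ u in (0:ℝ)..s, ((U u)ᵀ * U u)⁻¹) = 1 := mul_eq_one_comm.1 hLint
  exact ⟨⟨⟨D, _, hDL, hLint⟩, rfl⟩, Matrix.inv_eq_right_inv hDL⟩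
end

section
/- Let n ≥ 1 and let B : ℝ → Matrix (Fin n) (Fin n) ℝ be continuous such that B(u) is symmetric positive definite for every u ≥ 0. Then the function s ↦ det (∫₀^{s} B(u) du) is strictly monotonically increasing on (0, ∞). -/
open Matrix MeasureTheory

attribute [local instance] Matrix.normedAddCommGroup Matrix.normedSpace

section aux

variable {n : ℕ}

/-- The pairing `M ↦ (M x) ⬝ x` as a continuous linear map. -/
noncomputable def pairCLM (x : Fin n → ℝ) : Matrix (Fin n) (Fin n) ℝ →L[ℝ] ℝ :=
  LinearMap.toContinuousLinearMap
    { toFun := fun M => (M *ᵥ x) ⬝ᵥ x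
      map_add' := fun M N => by simp [Matrix.add_mulVec, add_dotProduct]
      map_smul' := fun r M => by
        simp [Matrix.smul_mulVec, smul_dotProduct] }

@[simp] lemma pairCLM_apply (x : Fin n → ℝ) (M : Matrix (Fin n) (Fin n) ℝ) :
    pairCLM x M = (M *ᵥ x) ⬝ᵥ x := rfl

/-- Transpose as a continuous linear map. -/
noncomputable def transposeCLM : Matrix (Fin n) (Fin n) ℝ →L[ℝ] Matrix (Fin n) (Fin n) ℝ :=
  LinearMap.toContinuousLinearMap
    { toFun := fun M => Mᵀ
      map_add' := fun M N => Matrix.transpose_add M N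
      map_smul' := fun r M => Matrix.transpose_smul r M }

@[simp] lemma transposeCLM_apply (M : Matrix (Fin n) (Fin n) ℝ) :
    transposeCLM M = Mᵀ := rfl

lemma integral_posDef (B : ℝ → Matrix (Fin n) (Fin n) ℝ) (hBc : Continuous B)
    (hBsym : ∀ u : ℝ, 0 ≤ u → (B u)ᵀ = B u)
    (hBpos : ∀ u : ℝ, 0 ≤ u → ∀ x : Fin n → ℝ, x ≠ 0 → 0 < (B u *ᵥ x) ⬝ᵥ x)
    {a b : ℝ} (ha : 0 ≤ a) (hab : a < b) :
    (∫ u in a..b, B u).PosDef := by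
  have hint := hBc.intervalIntegrable (μ := volume) a b
  refine Matrix.posDef_iff_dotProduct_mulVec.mpr ⟨?_, ?_⟩
  · show (∫ u in a..b, B u)ᴴ = _
    have h1 : (∫ u in a..b, B u)ᴴ = (∫ u in a..b, B u)ᵀ := by
      ext i j; simp [Matrix.conjTranspose_apply]
    erw [h1, show (∫ u in a..b, B u)ᵀ = transposeCLM (∫ u in a..b, B u) from rfl,
      ← ContinuousLinearMap.intervalIntegral_comp_comm _ hint]
    refine intervalIntegral.integral_congr fun u hu => ?_
    have hu0 : 0 ≤ u := by
      rcases hu with ⟨h1, _⟩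
      rw [min_eq_left hab.le] at h1
      exact ha.trans h1
    exact hBsym u hu0
  · intro x hx
    have key : ((∫ u in a..b, B u) *ᵥ x) ⬝ᵥ x = ∫ u in a..b, (B u *ᵥ x) ⬝ᵥ x := by
      erw [show ((∫ u in a..b, B u) *ᵥ x) ⬝ᵥ x = pairCLM x (∫ u in a..b, B u) from rfl,
        ← ContinuousLinearMap.intervalIntegral_comp_comm _ hint]
      rfl
    have hcont : Continuous fun u => (B u *ᵥ x) ⬝ᵥ x := (pairCLM x).continuous.comp hBc
    have hpos : 0 < ∫ u in a..b, (B u *ᵥ x) ⬝ᵥ x := by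
      refine intervalIntegral.intervalIntegral_pos_of_pos_on
        (hcont.intervalIntegrable a b) (fun u hu => ?_) hab
      exact hBpos u (ha.trans hu.1.le) x hx
    rw [star_trivial, dotProduct_comm, key]
    exact hpos

lemma one_lt_det_one_add (hn : 1 ≤ n) {D : Matrix (Fin n) (Fin n) ℝ}
    (hD : D.PosSemidef) (hdet : 0 < D.det) : 1 < (1 + D).det := by
  have hH := hD.isHermitian
  have hev : ∀ i, 0 < hH.eigenvalues i := by
    intro i
    rcases (hD.eigenvalues_nonneg i).lt_or_eq with h | h
    · exact h
    · exfalso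
      have hd : D.det = ∏ j, (hH.eigenvalues j : ℝ) := hH.det_eq_prod_eigenvalues
      rw [hd] at hdet
      have hne : (hH.eigenvalues i : ℝ) ≠ 0 := by
        intro h0
        rw [Finset.prod_eq_zero (Finset.mem_univ i) h0] at hdet
        exact lt_irrefl 0 hdet
      exact hne h.symm
  have hspec := hH.spectral_theorem
  set U := (hH.eigenvectorUnitary : Matrix (Fin n) (Fin n) ℝ) with hU
  set d : Matrix (Fin n) (Fin n) ℝ := Matrix.diagonal (RCLike.ofReal ∘ hH.eigenvalues) with hd
  have hUU : U * star U = 1 := Matrix.mem_unitaryGroup_iff.mp hH.eigenvectorUnitary.2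
  have h1D : 1 + D = U * (1 + d) * star U := by
    rw [Matrix.mul_add, Matrix.add_mul, Matrix.mul_one, hUU, hspec, Unitary.conjStarAlgAut_apply]
  have hdetU : U.det * (star U).det = 1 := by
    rw [← Matrix.det_mul, hUU, Matrix.det_one]
  have hprod : (1 + d).det = ∏ i, (1 + hH.eigenvalues i) := by
    rw [hd, ← Matrix.diagonal_one, Matrix.diagonal_add, Matrix.det_diagonal]
    simp
  have hgt : 1 < ∏ i, (1 + hH.eigenvalues i) := by
    have := Finset.prod_lt_prod_of_nonempty (f := fun _ : Fin n => (1:ℝ))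
      (g := fun i => 1 + hH.eigenvalues i) (fun i _ => one_pos)
      (fun i _ => lt_add_of_pos_right 1 (hev i)) (Finset.univ_nonempty_iff.mpr ⟨⟨0, hn⟩⟩)
    simpa using this
  calc (1:ℝ) < ∏ i, (1 + hH.eigenvalues i) := hgt
    _ = (1 + d).det * (U.det * (star U).det) := by rw [hdetU, hprod, mul_one]
    _ = U.det * (1 + d).det * (star U).det := by ring
    _ = (U * (1 + d) * star U).det := by rw [Matrix.det_mul, Matrix.det_mul]
    _ = (1 + D).det := by rw [← h1D]

open scoped MatrixOrder in
lemma det_lt_det_add (hn : 1 ≤ n) {A C : Matrix (Fin n) (Fin n) ℝ}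
    (hA : A.PosDef) (hC : C.PosDef) : A.det < (A + C).det := by
  set S := CFC.sqrt A with hSdef
  have hS : S.PosSemidef := (CFC.sqrt_nonneg A).posSemidef
  have hSS : S * S = A := CFC.sqrt_mul_sqrt_self A hA.posSemidef.nonneg
  have hdetS : S.det * S.det = A.det := by rw [← Matrix.det_mul, hSS]
  have hdetA : 0 < A.det := hA.det_pos
  have hSnonneg : 0 ≤ S.det := by
    rw [hS.isHermitian.det_eq_prod_eigenvalues]
    exact Finset.prod_nonneg fun i _ => hS.eigenvalues_nonneg i
  have hSpos : 0 < S.det := by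
    rcases hSnonneg.lt_or_eq with h | h
    · exact h
    · exfalso; rw [← h, mul_zero] at hdetS; exact hdetA.ne hdetS
  have : Invertible S := (Matrix.isUnit_iff_isUnit_det S |>.2 hSpos.ne'.isUnit).invertible
  set D := S⁻¹ * C * S⁻¹ with hDdef
  have hSinvH : S⁻¹ᴴ = S⁻¹ := (hS.isHermitian.inv).eq
  have hD : D.PosSemidef := by
    have h := hC.posSemidef.conjTranspose_mul_mul_same S⁻¹
    rwa [hSinvH] at h
  have hdetD : 0 < D.det := by
    rw [hDdef, Matrix.det_mul, Matrix.det_mul, Matrix.det_nonsing_inv,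
      Ring.inverse_eq_inv']
    have h1 : 0 < S.det⁻¹ := by positivity
    have hCd := hC.det_pos
    positivity
  have hACD : A + C = S * (1 + D) * S := by
    rw [Matrix.mul_add, Matrix.add_mul, Matrix.mul_one, hSS, hDdef]
    congr 1
    rw [← Matrix.mul_assoc, ← Matrix.mul_assoc, Matrix.mul_inv_of_invertible, Matrix.one_mul,
      Matrix.mul_assoc, Matrix.inv_mul_of_invertible, Matrix.mul_one]
  rw [hACD, Matrix.det_mul, Matrix.det_mul]
  have h1 : 1 < (1 + D).det := one_lt_det_one_add hn hD hdetD
  calc A.det = A.det * 1 := (mul_one _).symm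
    _ < A.det * (1 + D).det := (mul_lt_mul_iff_right₀ hdetA).mpr h1
    _ = S.det * (1 + D).det * S.det := by rw [← hdetS]; ring

end aux

/-- If `B(u)` is symmetric positive definite for all `u ≥ 0`, then
`s ↦ det ∫₀ˢ B(u) du` is strictly monotonically increasing on `(0, ∞)`. -/
theorem det_integral_strictMonoOn {n : ℕ} (hn : 1 ≤ n)
    (B : ℝ → Matrix (Fin n) (Fin n) ℝ) (hBc : Continuous B)
    (hBsym : ∀ u : ℝ, 0 ≤ u → (B u)ᵀ = B u)
    (hBpos : ∀ u : ℝ, 0 ≤ u → ∀ x : Fin n → ℝ, x ≠ 0 → 0 < (B u *ᵥ x) ⬝ᵥ x) :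
    StrictMonoOn (fun s : ℝ => (∫ u in (0 : ℝ)..s, B u).det) (Set.Ioi (0 : ℝ)) := by
  intro a ha b hb hab
  simp only [Set.mem_Ioi] at ha hb
  have hsplit : (∫ u in (0:ℝ)..b, B u) = (∫ u in (0:ℝ)..a, B u) + ∫ u in a..b, B u :=
    (intervalIntegral.integral_add_adjacent_intervals
      (hBc.intervalIntegrable 0 a) (hBc.intervalIntegrable a b)).symm
  have hA : (∫ u in (0:ℝ)..a, B u).PosDef :=
    integral_posDef B hBc hBsym hBpos le_rfl ha
  have hC : (∫ u in a..b, B u).PosDef :=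
    integral_posDef B hBc hBsym hBpos ha.le hab
  simpa [hsplit] using det_lt_det_add hn hA hC
end

section
/- Let n ≥ 1, let R : ℝ → Matrix (Fin n) (Fin n) ℝ be continuous with R(t) symmetric for every t, and let T > 0. Let U be a Lagrangian Jacobi solution along R with U(0) = 1 such that U(u) is invertible for every u ∈ [0, T], and let A be the Jacobi solution along R with A(0) = 0 and A'(0) = 1. Then A(t) = U(t) * ∫₀^{t} (U(u)ᵀ * U(u))⁻¹ du for every t ∈ [0, T]. -/
open Matrix MeasureTheory

attribute [local instance] Matrix.normedAddCommGroup Matrix.normedSpace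

section helpers
variable {n : ℕ}

lemma hasDerivAt_matrix {f : ℝ → Matrix (Fin n) (Fin n) ℝ}
    {f' : Matrix (Fin n) (Fin n) ℝ} {x : ℝ} :
    HasDerivAt f f' x ↔ ∀ i j, HasDerivAt (fun t => f t i j) (f' i j) x := by
  exact (hasDerivAt_pi (φ := f) (φ' := f')).trans (forall_congr' fun i => hasDerivAt_pi)

lemma HasDerivAt.matrixMul {f g : ℝ → Matrix (Fin n) (Fin n) ℝ}
    {f' g' : Matrix (Fin n) (Fin n) ℝ} {x : ℝ}
    (hf : HasDerivAt f f' x) (hg : HasDerivAt g g' x) :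
    HasDerivAt (fun t => f t * g t) (f' * g x + f x * g') x := by
  rw [hasDerivAt_matrix] at hf hg ⊢
  intro i j
  have : ∀ k ∈ Finset.univ, HasDerivAt (fun t => f t i k * g t k j)
      (f' i k * g x k j + f x i k * g' k j) x :=
    fun k _ => (hf i k).mul (hg k j)
  have := HasDerivAt.fun_sum this
  simpa [Matrix.mul_apply, Matrix.add_apply, Finset.sum_add_distrib] using this

lemma HasDerivAt.matrixTranspose {f : ℝ → Matrix (Fin n) (Fin n) ℝ}
    {f' : Matrix (Fin n) (Fin n) ℝ} {x : ℝ} (hf : HasDerivAt f f' x) :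
    HasDerivAt (fun t => (f t)ᵀ) f'ᵀ x := by
  rw [hasDerivAt_matrix] at hf ⊢
  intro i j
  simpa [Matrix.transpose_apply] using hf j i

lemma differentiableAt_matrix {f : ℝ → Matrix (Fin n) (Fin n) ℝ} {x : ℝ} :
    DifferentiableAt ℝ f x ↔ ∀ i j, DifferentiableAt ℝ (fun t => f t i j) x := by
  exact (differentiableAt_pi (Φ := f)).trans (forall_congr' fun i => differentiableAt_pi)

lemma differentiableAt_det {M : ℝ → Matrix (Fin n) (Fin n) ℝ} {x : ℝ}
    (h : ∀ i j, DifferentiableAt ℝ (fun t => M t i j) x) :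
    DifferentiableAt ℝ (fun t => (M t).det) x := by
  simp only [Matrix.det_apply']
  apply DifferentiableAt.fun_sum
  intro σ _
  exact DifferentiableAt.const_mul (DifferentiableAt.fun_finsetProd (fun i _ => h (σ i) i)) _

lemma differentiableAt_adjugate {M : ℝ → Matrix (Fin n) (Fin n) ℝ} {x : ℝ}
    (h : ∀ i j, DifferentiableAt ℝ (fun t => M t i j) x) (i j : Fin n) :
    DifferentiableAt ℝ (fun t => (M t).adjugate i j) x := by
  simp only [Matrix.adjugate_apply]
  apply differentiableAt_det
  intro k l
  simp only [Matrix.updateRow_apply]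
  by_cases hk : k = j <;> simp [hk, h]

lemma differentiableAt_matrix_inv {M : ℝ → Matrix (Fin n) (Fin n) ℝ} {x : ℝ}
    (h : DifferentiableAt ℝ M x) (hdet : (M x).det ≠ 0) :
    DifferentiableAt ℝ (fun t => (M t)⁻¹) x := by
  simp only [Matrix.inv_def, Ring.inverse_eq_inv']
  have hent : ∀ i j, DifferentiableAt ℝ (fun t => M t i j) x :=
    differentiableAt_matrix.mp h
  have hdet' : DifferentiableAt ℝ (fun t => (M t).det) x := differentiableAt_det hent
  exact DifferentiableAt.smul (hdet'.inv hdet)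
    (differentiableAt_matrix.mpr fun i j => differentiableAt_adjugate hent i j)

lemma continuousOn_matrix_inv {M : ℝ → Matrix (Fin n) (Fin n) ℝ} {s : Set ℝ}
    (h : Continuous M) (hdet : ∀ x ∈ s, (M x).det ≠ 0) :
    ContinuousOn (fun t => (M t)⁻¹) s := by
  simp only [Matrix.inv_def, Ring.inverse_eq_inv']
  exact (h.matrix_det.continuousOn.inv₀ hdet).smul h.matrix_adjugate.continuousOn

end helpers

/-- `A(t) = U(t) ∫₀ᵗ (UᵀU)⁻¹(u) du` where `A(0) = 0`, `A'(0) = 1`, and `U` is a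
nonsingular Lagrangian Jacobi solution with `U(0) = 1`. -/
theorem jacobi_A_eq_U_mul_integral {n : ℕ} (hn : 1 ≤ n)
    (R : ℝ → Matrix (Fin n) (Fin n) ℝ) (hRc : Continuous R)
    (hRsym : ∀ t : ℝ, (R t)ᵀ = R t)
    (T : ℝ) (hT : 0 < T)
    (U : ℝ → Matrix (Fin n) (Fin n) ℝ)
    (hU : IsJacobi R U) (hUL : IsLagrangian U) (hU0 : U 0 = 1)
    (hUinv : ∀ u ∈ Set.Icc (0 : ℝ) T, IsUnit (U u))
    (A : ℝ → Matrix (Fin n) (Fin n) ℝ)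
    (hA : IsJacobi R A) (hA0 : A 0 = 0) (hA'0 : deriv A 0 = 1) :
    ∀ t ∈ Set.Icc (0 : ℝ) T,
      A t = U t * ∫ u in (0 : ℝ)..t, ((U u)ᵀ * U u)⁻¹ := by
  classical
  have h2 : (2 : WithTop ℕ∞) = 1 + 1 := by norm_num
  have hUc2 : ContDiff ℝ (1 + 1) U := h2 ▸ hU.1
  have hAc2 : ContDiff ℝ (1 + 1) A := h2 ▸ hA.1
  have hUd : Differentiable ℝ U := (contDiff_succ_iff_deriv.mp hUc2).1
  have hAd : Differentiable ℝ A := (contDiff_succ_iff_deriv.mp hAc2).1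
  have hU'd : Differentiable ℝ (deriv U) :=
    (contDiff_succ_iff_deriv.mp hUc2).2.2.differentiable one_ne_zero
  have hA'd : Differentiable ℝ (deriv A) :=
    (contDiff_succ_iff_deriv.mp hAc2).2.2.differentiable one_ne_zero
  have hU'' : ∀ t, deriv (deriv U) t = -(R t * U t) :=
    fun t => eq_neg_of_add_eq_zero_left (hU.2 t)
  have hA'' : ∀ t, deriv (deriv A) t = -(R t * A t) :=
    fun t => eq_neg_of_add_eq_zero_left (hA.2 t)
  -- the Wronskian is constant equal to 1
  set W : ℝ → Matrix (Fin n) (Fin n) ℝ :=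
    fun t => (U t)ᵀ * deriv A t - (deriv U t)ᵀ * A t with hWdef
  have hW0 : ∀ t, HasDerivAt W 0 t := by
    intro t
    have h1 : HasDerivAt (fun s => (U s)ᵀ * deriv A s)
        ((deriv U t)ᵀ * deriv A t + (U t)ᵀ * deriv (deriv A) t) t :=
      ((hUd t).hasDerivAt.matrixTranspose).matrixMul (hA'd t).hasDerivAt
    have h2 : HasDerivAt (fun s => (deriv U s)ᵀ * A s)
        ((deriv (deriv U) t)ᵀ * A t + (deriv U t)ᵀ * deriv A t) t :=
      ((hU'd t).hasDerivAt.matrixTranspose).matrixMul (hAd t).hasDerivAt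
    have h3 := h1.sub h2
    have he : (deriv U t)ᵀ * deriv A t + (U t)ᵀ * deriv (deriv A) t -
        ((deriv (deriv U) t)ᵀ * A t + (deriv U t)ᵀ * deriv A t) = 0 := by
      rw [hA'' t, hU'' t]
      simp only [Matrix.transpose_neg, Matrix.transpose_mul, hRsym t,
        Matrix.mul_neg, Matrix.neg_mul, Matrix.mul_assoc]
      abel
    rwa [he] at h3
  have hW1 : ∀ t, W t = 1 := by
    intro t
    have hc : W t = W 0 :=
      is_const_of_deriv_eq_zero (fun s => (hW0 s).differentiableAt)
        (fun s => (hW0 s).deriv) t 0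
    rw [hc, hWdef]
    simp [hU0, hA0, hA'0]
  -- the open set where U is invertible
  set S : Set ℝ := {u | (U u).det ≠ 0} with hSdef
  have hSopen : IsOpen S :=
    isOpen_compl_singleton.preimage (hUd.continuous.matrix_det)
  have hTS : Set.Icc (0 : ℝ) T ⊆ S := fun u hu => by
    have := (Matrix.isUnit_iff_isUnit_det _).mp (hUinv u hu)
    exact isUnit_iff_ne_zero.mp this
  set F : ℝ → Matrix (Fin n) (Fin n) ℝ := fun u => (U u)⁻¹ * A u with hFdef
  -- key derivative computation
  have key : ∀ x ∈ S, HasDerivAt F (((U x)ᵀ * U x)⁻¹) x := by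
    intro x hx
    have hUdet : IsUnit (U x).det := isUnit_iff_ne_zero.mpr hx
    have hFd : DifferentiableAt ℝ F x :=
      ((differentiableAt_matrix_inv (hUd x) hx).hasDerivAt.matrixMul
        (hAd x).hasDerivAt).differentiableAt
    have hF : HasDerivAt F (deriv F x) x := hFd.hasDerivAt
    have hEq : (fun s => U s * F s) =ᶠ[nhds x] A := by
      filter_upwards [hSopen.mem_nhds hx] with s hs
      show U s * ((U s)⁻¹ * A s) = A s
      rw [← Matrix.mul_assoc, Matrix.mul_nonsing_inv _ (isUnit_iff_ne_zero.mpr hs),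
        Matrix.one_mul]
    have hprod : HasDerivAt (fun s => U s * F s)
        (deriv U x * F x + U x * deriv F x) x :=
      (hUd x).hasDerivAt.matrixMul hF
    have hda : deriv A x = deriv U x * F x + U x * deriv F x :=
      (hprod.congr_of_eventuallyEq hEq.symm).deriv ▸ rfl
    have hUUF' : ((U x)ᵀ * U x) * deriv F x = 1 := by
      have e1 : (U x)ᵀ * deriv A x =
          (U x)ᵀ * deriv U x * F x + ((U x)ᵀ * U x) * deriv F x := by
        rw [hda, Matrix.mul_add, Matrix.mul_assoc, Matrix.mul_assoc]
      have e2 : (U x)ᵀ * deriv U x * F x = (deriv U x)ᵀ * A x := by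
        rw [← hUL x, hFdef]
        show (deriv U x)ᵀ * U x * ((U x)⁻¹ * A x) = (deriv U x)ᵀ * A x
        rw [Matrix.mul_assoc, ← Matrix.mul_assoc (U x),
          Matrix.mul_nonsing_inv _ hUdet, Matrix.one_mul]
      have := hW1 x
      rw [hWdef] at this
      have e3 : ((U x)ᵀ * U x) * deriv F x =
          (U x)ᵀ * deriv A x - (deriv U x)ᵀ * A x := by
        rw [e1, e2]; abel
      rw [e3]; exact this
    have : ((U x)ᵀ * U x)⁻¹ = deriv F x := Matrix.inv_eq_right_inv hUUF'
    rw [this]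
    exact hF
  -- fundamental theorem of calculus
  intro t ht
  have ht0 : (0 : ℝ) ≤ t := ht.1
  have huIcc : Set.uIcc (0 : ℝ) t = Set.Icc 0 t := Set.uIcc_of_le ht0
  have hsub : Set.Icc (0 : ℝ) t ⊆ S :=
    subset_trans (Set.Icc_subset_Icc_right ht.2) hTS
  have hderiv : ∀ u ∈ Set.uIcc (0 : ℝ) t,
      HasDerivAt F (((U u)ᵀ * U u)⁻¹) u := by
    intro u hu
    exact key u (hsub (huIcc ▸ hu))
  have hcont : ContinuousOn (fun u => ((U u)ᵀ * U u)⁻¹) (Set.uIcc (0 : ℝ) t) := by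
    apply continuousOn_matrix_inv (hUd.continuous.matrix_transpose.matrix_mul hUd.continuous)
    intro x hx
    have hxS : x ∈ S := hsub (huIcc ▸ hx)
    rw [Matrix.det_mul, Matrix.det_transpose]
    exact mul_ne_zero hxS hxS
  letI : ENormedAddMonoid (Matrix (Fin n) (Fin n) ℝ) :=
    NormedAddCommGroup.toENormedAddCommMonoid.toENormedAddMonoid
  have hInt : IntervalIntegrable (fun u => ((U u)ᵀ * U u)⁻¹) volume 0 t :=
    hcont.intervalIntegrable
  have hFTC := intervalIntegral.integral_eq_sub_of_hasDerivAt hderiv hInt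
  have hF0 : F 0 = 0 := by rw [hFdef]; simp [hA0]
  rw [hFTC, hF0, sub_zero, hFdef]
  show A t = U t * ((U t)⁻¹ * A t)
  have hUdet : IsUnit (U t).det := isUnit_iff_ne_zero.mpr (hsub ⟨ht0, le_refl t⟩)
  rw [← Matrix.mul_assoc, Matrix.mul_nonsing_inv _ hUdet, Matrix.one_mul]
end

section
/- Let n ≥ 1, let R : ℝ → Matrix (Fin n) (Fin n) ℝ be continuous with R(t) symmetric for every t, and let U, S be Lagrangian Jacobi solutions along R with U(0) = S(0) = 1. Then for every t such that U(t) and S(t) are invertible, the matrices U'(t) * U(t)⁻¹ and S'(t) * S(t)⁻¹ are symmetric and U'(t) * U(t)⁻¹ − S'(t) * S(t)⁻¹ = (U(t)ᵀ)⁻¹ * (U'(0) − S'(0)) * S(t)⁻¹ = (S(t)ᵀ)⁻¹ * (U'(0) − S'(0)) * U(t)⁻¹. -/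
open Matrix MeasureTheory

attribute [local instance] Matrix.normedAddCommGroup Matrix.normedSpace

noncomputable def mulCLM (n : ℕ) :
    Matrix (Fin n) (Fin n) ℝ →L[ℝ] Matrix (Fin n) (Fin n) ℝ →L[ℝ] Matrix (Fin n) (Fin n) ℝ :=
  LinearMap.toContinuousLinearMap
    { toFun := fun A => LinearMap.toContinuousLinearMap (LinearMap.mulLeft ℝ A)
      map_add' := by intro A B; ext C; simp [add_mul]
      map_smul' := by intro r A; ext C; simp [smul_mul_assoc] }

@[simp] lemma mulCLM_apply {n : ℕ} (A B : Matrix (Fin n) (Fin n) ℝ) :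
    mulCLM n A B = A * B := rfl

noncomputable def transCLM (n : ℕ) :
    Matrix (Fin n) (Fin n) ℝ →L[ℝ] Matrix (Fin n) (Fin n) ℝ :=
  LinearMap.toContinuousLinearMap
    { toFun := fun A => Aᵀ
      map_add' := by intro A B; simp [Matrix.transpose_add]
      map_smul' := by intro r A; simp [Matrix.transpose_smul] }

@[simp] lemma transCLM_apply {n : ℕ} (A : Matrix (Fin n) (Fin n) ℝ) :
    transCLM n A = Aᵀ := rfl

lemma hasDerivAt_matMul {n : ℕ} {f g : ℝ → Matrix (Fin n) (Fin n) ℝ}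
    {f' g' : Matrix (Fin n) (Fin n) ℝ} {t : ℝ}
    (hf : HasDerivAt f f' t) (hg : HasDerivAt g g' t) :
    HasDerivAt (fun s => f s * g s) (f' * g t + f t * g') t := by
  have h1 := (mulCLM n).hasDerivAt_of_bilinear (fun _ => hf) (fun _ => hg)
  rw [add_comm] at h1; exact h1

lemma hasDerivAt_transpose {n : ℕ} {f : ℝ → Matrix (Fin n) (Fin n) ℝ}
    {f' : Matrix (Fin n) (Fin n) ℝ} {t : ℝ} (hf : HasDerivAt f f' t) :
    HasDerivAt (fun s => (f s)ᵀ) f'ᵀ t := by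
  exact (transCLM n).hasFDerivAt.comp_hasDerivAt t hf

/-- Symmetry of `A' * A⁻¹` for a Lagrangian-type pair. -/
lemma sym_aux {n : ℕ} {A A' : Matrix (Fin n) (Fin n) ℝ}
    (h : A'ᵀ * A = Aᵀ * A') (hA : IsUnit A.det) :
    (A' * A⁻¹)ᵀ = A' * A⁻¹ := by
  have hAT : IsUnit Aᵀ.det := by rwa [Matrix.det_transpose]
  calc (A' * A⁻¹)ᵀ = Aᵀ⁻¹ * A'ᵀ := by
        rw [Matrix.transpose_mul, Matrix.transpose_nonsing_inv]
    _ = Aᵀ⁻¹ * (A'ᵀ * A) * A⁻¹ := by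
        rw [Matrix.mul_assoc Aᵀ⁻¹, Matrix.mul_assoc, Matrix.mul_nonsing_inv _ hA, mul_one]
    _ = Aᵀ⁻¹ * Aᵀ * A' * A⁻¹ := by
        rw [h, ← Matrix.mul_assoc]
    _ = A' * A⁻¹ := by rw [Matrix.nonsing_inv_mul _ hAT, one_mul]

/-- For Lagrangian Jacobi solutions `U`, `S` with `U(0) = S(0) = 1`, the matrices
`U'(t)U(t)⁻¹` and `S'(t)S(t)⁻¹` are symmetric and
`U'(t)U(t)⁻¹ − S'(t)S(t)⁻¹ = (U(t)ᵀ)⁻¹(U'(0) − S'(0))S(t)⁻¹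
  = (S(t)ᵀ)⁻¹(U'(0) − S'(0))U(t)⁻¹`. -/
theorem riccati_difference_identity {n : ℕ} (hn : 1 ≤ n)
    (R : ℝ → Matrix (Fin n) (Fin n) ℝ) (hRc : Continuous R)
    (hRsym : ∀ t : ℝ, (R t)ᵀ = R t)
    (U S : ℝ → Matrix (Fin n) (Fin n) ℝ)
    (hU : IsJacobi R U) (hUL : IsLagrangian U) (hU0 : U 0 = 1)
    (hS : IsJacobi R S) (hSL : IsLagrangian S) (hS0 : S 0 = 1) :
    ∀ t : ℝ, IsUnit (U t) → IsUnit (S t) →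
      (deriv U t * (U t)⁻¹)ᵀ = deriv U t * (U t)⁻¹ ∧
      (deriv S t * (S t)⁻¹)ᵀ = deriv S t * (S t)⁻¹ ∧
      deriv U t * (U t)⁻¹ - deriv S t * (S t)⁻¹
        = ((U t)ᵀ)⁻¹ * (deriv U 0 - deriv S 0) * (S t)⁻¹ ∧
      ((U t)ᵀ)⁻¹ * (deriv U 0 - deriv S 0) * (S t)⁻¹
        = ((S t)ᵀ)⁻¹ * (deriv U 0 - deriv S 0) * (U t)⁻¹ := by
  -- differentiability facts
  have hUdiff : Differentiable ℝ U := hU.1.differentiable (by norm_num)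
  have hSdiff : Differentiable ℝ S := hS.1.differentiable (by norm_num)
  have hU2 : ContDiff ℝ ((1 : ℕ) + 1) U := by exact_mod_cast hU.1
  have hS2 : ContDiff ℝ ((1 : ℕ) + 1) S := by exact_mod_cast hS.1
  have hU'diff : Differentiable ℝ (deriv U) :=
    ((contDiff_succ_iff_deriv.mp hU2).2.2).differentiable (by norm_num)
  have hS'diff : Differentiable ℝ (deriv S) :=
    ((contDiff_succ_iff_deriv.mp hS2).2.2).differentiable (by norm_num)
  -- Wronskian
  set W : ℝ → Matrix (Fin n) (Fin n) ℝ :=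
    fun s => (deriv U s)ᵀ * S s - (U s)ᵀ * deriv S s with hWdef
  have hWderiv : ∀ t : ℝ, HasDerivAt W 0 t := by
    intro t
    have hU'' : deriv (deriv U) t = -(R t * U t) := by
      have := hU.2 t; linear_combination (norm := module) this
    have hS'' : deriv (deriv S) t = -(R t * S t) := by
      have := hS.2 t; linear_combination (norm := module) this
    have h1 : HasDerivAt (fun s => (deriv U s)ᵀ * S s)
        ((-(R t * U t))ᵀ * S t + (deriv U t)ᵀ * deriv S t) t := by
      refine hasDerivAt_matMul (hasDerivAt_transpose ?_) (hSdiff t).hasDerivAt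
      rw [← hU'']; exact (hU'diff t).hasDerivAt
    have h2 : HasDerivAt (fun s => (U s)ᵀ * deriv S s)
        ((deriv U t)ᵀ * deriv S t + (U t)ᵀ * -(R t * S t)) t := by
      refine hasDerivAt_matMul (hasDerivAt_transpose (hUdiff t).hasDerivAt) ?_
      rw [← hS'']; exact (hS'diff t).hasDerivAt
    have h3 := h1.sub h2
    have heq : (-(R t * U t))ᵀ * S t + (deriv U t)ᵀ * deriv S t -
        ((deriv U t)ᵀ * deriv S t + (U t)ᵀ * -(R t * S t)) = 0 := by
      have : (-(R t * U t))ᵀ = -((U t)ᵀ * R t) := by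
        rw [Matrix.transpose_neg, Matrix.transpose_mul, hRsym]
      rw [this, neg_mul, mul_neg, ← Matrix.mul_assoc]
      abel
    rwa [heq] at h3
  have hWconst : ∀ t : ℝ, W t = W 0 := by
    intro t
    exact is_const_of_deriv_eq_zero (fun s => (hWderiv s).differentiableAt)
      (fun s => (hWderiv s).deriv) t 0
  have hU'0sym : (deriv U 0)ᵀ = deriv U 0 := by
    have := hUL 0; rwa [hU0, mul_one, Matrix.transpose_one, one_mul] at this
  have hS'0sym : (deriv S 0)ᵀ = deriv S 0 := by
    have := hSL 0; rwa [hS0, mul_one, Matrix.transpose_one, one_mul] at this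
  have hW0 : W 0 = deriv U 0 - deriv S 0 := by
    simp [hWdef, hU0, hS0, hU'0sym]
  -- main part
  intro t hUt hSt
  have hAd : IsUnit (U t).det := (Matrix.isUnit_iff_isUnit_det _).mp hUt
  have hBd : IsUnit (S t).det := (Matrix.isUnit_iff_isUnit_det _).mp hSt
  have hATd : IsUnit (U t)ᵀ.det := by rwa [Matrix.det_transpose]
  have hBTd : IsUnit (S t)ᵀ.det := by rwa [Matrix.det_transpose]
  have symU := sym_aux (hUL t) hAd
  have symS := sym_aux (hSL t) hBd
  refine ⟨symU, symS, ?_, ?_⟩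
  · -- U'U⁻¹ - S'S⁻¹ = (Uᵀ)⁻¹ W S⁻¹
    have hWt : (deriv U t)ᵀ * S t - (U t)ᵀ * deriv S t = deriv U 0 - deriv S 0 := by
      rw [← hW0]; exact hWconst t
    rw [← hWt]
    rw [Matrix.mul_sub, Matrix.sub_mul]
    simp only [Matrix.mul_assoc]
    rw [Matrix.mul_nonsing_inv _ hBd, mul_one,
      ← Matrix.mul_assoc ((U t)ᵀ)⁻¹ (U t)ᵀ, Matrix.nonsing_inv_mul _ hATd, one_mul,
      ← Matrix.transpose_nonsing_inv, ← Matrix.transpose_mul, symU]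
  · -- (Uᵀ)⁻¹ W S⁻¹ = (Sᵀ)⁻¹ W U⁻¹ : both equal the difference
    have hWt : (deriv U t)ᵀ * S t - (U t)ᵀ * deriv S t = deriv U 0 - deriv S 0 := by
      rw [← hW0]; exact hWconst t
    -- transposed Wronskian
    have hWtT : (S t)ᵀ * deriv U t - (deriv S t)ᵀ * U t = deriv U 0 - deriv S 0 := by
      have := congrArg Matrix.transpose hWt
      rwa [Matrix.transpose_sub, Matrix.transpose_mul, Matrix.transpose_mul,
        Matrix.transpose_transpose, Matrix.transpose_transpose, Matrix.transpose_sub,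
        hU'0sym, hS'0sym] at this
    have lhs_eq : ((U t)ᵀ)⁻¹ * (deriv U 0 - deriv S 0) * (S t)⁻¹
        = deriv U t * (U t)⁻¹ - deriv S t * (S t)⁻¹ := by
      rw [← hWt, Matrix.mul_sub, Matrix.sub_mul]
      simp only [Matrix.mul_assoc]
      rw [Matrix.mul_nonsing_inv _ hBd, mul_one,
        ← Matrix.mul_assoc ((U t)ᵀ)⁻¹ (U t)ᵀ, Matrix.nonsing_inv_mul _ hATd, one_mul,
        ← Matrix.transpose_nonsing_inv, ← Matrix.transpose_mul, symU]
    have rhs_eq : ((S t)ᵀ)⁻¹ * (deriv U 0 - deriv S 0) * (U t)⁻¹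
        = deriv U t * (U t)⁻¹ - deriv S t * (S t)⁻¹ := by
      rw [← hWtT, Matrix.mul_sub, Matrix.sub_mul]
      simp only [Matrix.mul_assoc]
      rw [Matrix.mul_nonsing_inv _ hAd, mul_one,
        ← Matrix.mul_assoc ((S t)ᵀ)⁻¹ (S t)ᵀ, Matrix.nonsing_inv_mul _ hBTd, one_mul,
        ← Matrix.transpose_nonsing_inv, ← Matrix.transpose_mul, symS]
    rw [lhs_eq, rhs_eq]
end

section
/- Let n ≥ 1 and t₀ < t₁, and let B : ℝ → Matrix (Fin n) (Fin n) ℝ be continuous such that B(s) is symmetric positive definite for every s ∈ [t₀, t₁]. Then the matrix ∫_{t₀}^{t₁} B(s) ds is symmetric positive definite, and its inverse satisfies ‖(∫_{t₀}^{t₁} B(s) ds)⁻¹‖ ≤ (∫_{t₀}^{t₁} ‖B(s)⁻¹‖⁻¹ ds)⁻¹, where ‖·‖ denotes the operator norm on matrices acting on Euclidean ℝⁿ. -/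
open Matrix MeasureTheory

attribute [local instance] Matrix.normedAddCommGroup Matrix.normedSpace

/-- The operator norm of a matrix acting on Euclidean `ℝⁿ`. -/
noncomputable def matrixOpNorm {n : ℕ} (M : Matrix (Fin n) (Fin n) ℝ) : ℝ :=
  ‖Matrix.toEuclideanCLM (𝕜 := ℝ) M‖

namespace Helpers
variable {n : ℕ}

noncomputable def e : (Fin n → ℝ) ≃ EuclideanSpace ℝ (Fin n) := (WithLp.equiv 2 (Fin n → ℝ)).symm

lemma dot_eq_inner (u v : Fin n → ℝ) :
    u ⬝ᵥ v = @inner ℝ _ _ (e u) (e v) := by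
  simp [PiLp.inner_apply, dotProduct, RCLike.inner_apply, e, mul_comm]

lemma dot_self (u : Fin n → ℝ) : u ⬝ᵥ u = ‖e (n := n) u‖ ^ 2 := by
  rw [dot_eq_inner, real_inner_self_eq_norm_sq]

lemma eCLM (M : Matrix (Fin n) (Fin n) ℝ) (x : Fin n → ℝ) :
    Matrix.toEuclideanCLM (𝕜 := ℝ) M (e x) = e (M *ᵥ x) := by
  simp [e, Matrix.toEuclideanCLM_toLp, Matrix.toLin'_apply]

lemma mulVec_norm_le (M : Matrix (Fin n) (Fin n) ℝ) (x : Fin n → ℝ) :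
    ‖e (M *ᵥ x)‖ ≤ matrixOpNorm M * ‖e (n := n) x‖ := by
  rw [← eCLM]
  exact (Matrix.toEuclideanCLM (𝕜 := ℝ) M).le_opNorm _

lemma matrixOpNorm_nonneg (M : Matrix (Fin n) (Fin n) ℝ) : 0 ≤ matrixOpNorm M :=
  norm_nonneg _

end Helpers
namespace Helpers2
open Helpers
variable {n : ℕ}

lemma dot_symm {M : Matrix (Fin n) (Fin n) ℝ} (hsym : Mᵀ = M) (u v : Fin n → ℝ) :
    (M *ᵥ u) ⬝ᵥ v = (M *ᵥ v) ⬝ᵥ u := by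
  rw [dotProduct_comm, Matrix.dotProduct_mulVec, ← Matrix.mulVec_transpose, hsym]

lemma form_cs {M : Matrix (Fin n) (Fin n) ℝ} (hsym : Mᵀ = M)
    (hpsd : ∀ x, 0 ≤ (M *ᵥ x) ⬝ᵥ x) (u v : Fin n → ℝ) :
    ((M *ᵥ u) ⬝ᵥ v) ^ 2 ≤ ((M *ᵥ u) ⬝ᵥ u) * ((M *ᵥ v) ⬝ᵥ v) := by
  have key : ∀ t : ℝ,
      0 ≤ ((M *ᵥ v) ⬝ᵥ v) * (t * t) + (2 * ((M *ᵥ u) ⬝ᵥ v)) * t + ((M *ᵥ u) ⬝ᵥ u) := by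
    intro t
    have h := hpsd (u + t • v)
    have expand : (M *ᵥ (u + t • v)) ⬝ᵥ (u + t • v)
        = ((M *ᵥ v) ⬝ᵥ v) * (t * t) + (2 * ((M *ᵥ u) ⬝ᵥ v)) * t + ((M *ᵥ u) ⬝ᵥ u) := by
      rw [Matrix.mulVec_add, Matrix.mulVec_smul]
      simp only [add_dotProduct, dotProduct_add, smul_dotProduct, dotProduct_smul,
        smul_eq_mul]
      rw [dot_symm hsym v u]
      ring
    linarith [expand ▸ h]
  have hd := discrim_le_zero key
  rw [discrim] at hd
  nlinarith [hd]

lemma key_pointwise {M : Matrix (Fin n) (Fin n) ℝ} (hsym : Mᵀ = M)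
    (hpos : ∀ x : Fin n → ℝ, x ≠ 0 → 0 < (M *ᵥ x) ⬝ᵥ x) (x : Fin n → ℝ) :
    (matrixOpNorm M⁻¹)⁻¹ * (x ⬝ᵥ x) ≤ (M *ᵥ x) ⬝ᵥ x := by
  have hpsd : ∀ y, 0 ≤ (M *ᵥ y) ⬝ᵥ y := by
    intro y
    rcases eq_or_ne y 0 with rfl | hy
    · simp
    · exact (hpos y hy).le
  rcases eq_or_ne x 0 with rfl | hx
  · simp
  have hPD : M.PosDef := by
    refine Matrix.posDef_iff_dotProduct_mulVec.2 ⟨by rwa [Matrix.IsHermitian, Matrix.conjTranspose_eq_transpose_of_trivial], ?_⟩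
    intro y hy
    rw [show star y = y from rfl, dotProduct_comm]
    exact hpos y hy
  have hU : IsUnit M := hPD.isUnit
  have hMu : M *ᵥ (M⁻¹ *ᵥ x) = x := by
    rw [Matrix.mulVec_mulVec, Matrix.mul_nonsing_inv _ (Matrix.isUnit_iff_isUnit_det _ |>.1 hU),
      Matrix.one_mulVec]
  set u := M⁻¹ *ᵥ x with hu
  set N := matrixOpNorm (M⁻¹) with hN
  have hN0 : 0 ≤ N := matrixOpNorm_nonneg _
  have hq : 0 < (M *ᵥ x) ⬝ᵥ x := hpos x hx
  have hex : e (n := n) x ≠ 0 := by simpa [e] using hx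
  have hxx : 0 < x ⬝ᵥ x := by
    rw [dot_self]
    exact pow_pos (norm_pos_iff.mpr hex) 2
  have h1 : (x ⬝ᵥ x) ^ 2 ≤ (x ⬝ᵥ u) * ((M *ᵥ x) ⬝ᵥ x) := by
    have h := form_cs hsym hpsd u x
    rw [hMu] at h
    exact h
  have h2 : (x ⬝ᵥ u) ^ 2 ≤ (x ⬝ᵥ x) * (u ⬝ᵥ u) := by
    rw [dot_eq_inner x u, dot_eq_inner x x, dot_eq_inner u u, sq]
    exact real_inner_mul_inner_self_le _ _
  have h3 : u ⬝ᵥ u ≤ N ^ 2 * (x ⬝ᵥ x) := by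
    have hle := mulVec_norm_le M⁻¹ x
    rw [← hu, ← hN] at hle
    rw [dot_self, dot_self]
    nlinarith [norm_nonneg (e (n := n) u), norm_nonneg (e (n := n) x)]
  have h4 : 0 ≤ x ⬝ᵥ u := by
    have := hpsd u
    rwa [hMu] at this
  rcases eq_or_lt_of_le hN0 with hN0' | hNpos
  · rw [← hN0', _root_.inv_zero, zero_mul]
    exact hq.le
  have h5 : x ⬝ᵥ u ≤ N * (x ⬝ᵥ x) := by
    nlinarith [h2, h3, h4, hxx, hNpos, mul_le_mul_of_nonneg_left h3 hxx.le,
      mul_nonneg hN0 hxx.le]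
  have h7 : x ⬝ᵥ x ≤ N * ((M *ᵥ x) ⬝ᵥ x) := by
    nlinarith [h1, h5, hq, hxx]
  rw [inv_mul_le_iff₀ hNpos]
  exact h7

end Helpers2

namespace Helpers3
open Helpers Helpers2
variable {n : ℕ}

lemma continuous_matrixOpNorm : Continuous (matrixOpNorm (n := n)) := by
  have h1 : Continuous fun M : Matrix (Fin n) (Fin n) ℝ =>
      Matrix.toEuclideanCLM (𝕜 := ℝ) M := by
    have : IsLinearMap ℝ fun M : Matrix (Fin n) (Fin n) ℝ =>
        Matrix.toEuclideanCLM (𝕜 := ℝ) M := ⟨fun a b => map_add _ a b, fun c a => map_smul _ c a⟩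
    exact LinearMap.continuous_of_finiteDimensional this.mk'
  exact continuous_norm.comp h1

lemma matrixOpNorm_pos (hn : 1 ≤ n) {M : Matrix (Fin n) (Fin n) ℝ} (hM : IsUnit M) :
    0 < matrixOpNorm M := by
  rw [matrixOpNorm, norm_pos_iff]
  intro h0
  have : M = 0 := by
    have := (Matrix.toEuclideanCLM (𝕜 := ℝ)).injective
      (a₁ := M) (a₂ := 0) (by simpa using h0)
    exact this
  subst this
  haveI : Nonempty (Fin n) := ⟨⟨0, hn⟩⟩
  haveI : Nontrivial (Matrix (Fin n) (Fin n) ℝ) := by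
    refine ⟨1, 0, ?_⟩
    intro h
    have := congrFun (congrFun h ⟨0, hn⟩) ⟨0, hn⟩
    simp [Matrix.one_apply] at this
  exact hM.ne_zero rfl

end Helpers3

open Helpers Helpers2 Helpers3

/-- The integral of a continuous family of symmetric positive definite matrices is
symmetric positive definite, and the operator norm of its inverse satisfies
`‖(∫ B)⁻¹‖ ≤ (∫ ‖B(s)⁻¹‖⁻¹ ds)⁻¹`. -/
theorem integral_posDef_and_inv_opNorm_le {n : ℕ} (hn : 1 ≤ n)
    (t₀ t₁ : ℝ) (ht : t₀ < t₁)
    (B : ℝ → Matrix (Fin n) (Fin n) ℝ) (hBc : Continuous B)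
    (hBsym : ∀ s ∈ Set.Icc t₀ t₁, (B s)ᵀ = B s)
    (hBpos : ∀ s ∈ Set.Icc t₀ t₁, ∀ x : Fin n → ℝ, x ≠ 0 → 0 < (B s *ᵥ x) ⬝ᵥ x) :
    ((∫ s in t₀..t₁, B s)ᵀ = ∫ s in t₀..t₁, B s) ∧
    (∀ x : Fin n → ℝ, x ≠ 0 → 0 < ((∫ s in t₀..t₁, B s) *ᵥ x) ⬝ᵥ x) ∧
    matrixOpNorm ((∫ s in t₀..t₁, B s)⁻¹)
      ≤ (∫ s in t₀..t₁, (matrixOpNorm ((B s)⁻¹))⁻¹)⁻¹ := by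
  classical
  have hBi := hBc.intervalIntegrable (μ := MeasureTheory.volume) t₀ t₁
  have hIcc : Set.uIcc t₀ t₁ = Set.Icc t₀ t₁ := Set.uIcc_of_le ht.le
  set A := ∫ s in t₀..t₁, B s with hA
  -- (1) symmetry
  have hsymA : Aᵀ = A := by
    let T : Matrix (Fin n) (Fin n) ℝ →L[ℝ] Matrix (Fin n) (Fin n) ℝ :=
      LinearMap.toContinuousLinearMap
        (Matrix.transposeLinearEquiv (Fin n) (Fin n) ℝ ℝ).toLinearMap
    have h1 : Aᵀ = ∫ s in t₀..t₁, (B s)ᵀ := by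
      have h := (T.intervalIntegral_comp_comm hBi).symm
      exact h
    rw [h1]
    refine intervalIntegral.integral_congr ?_
    intro s hs
    rw [hIcc] at hs
    exact hBsym s hs
  -- quadratic form commutes with the integral
  have hform : ∀ x : Fin n → ℝ, (A *ᵥ x) ⬝ᵥ x = ∫ s in t₀..t₁, (B s *ᵥ x) ⬝ᵥ x := by
    intro x
    let L : Matrix (Fin n) (Fin n) ℝ →ₗ[ℝ] ℝ :=
      { toFun := fun M => (M *ᵥ x) ⬝ᵥ x
        map_add' := fun M N => by simp [Matrix.add_mulVec, add_dotProduct]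
        map_smul' := fun c M => by simp [Matrix.smul_mulVec, smul_dotProduct] }
    have h := (LinearMap.toContinuousLinearMap L).intervalIntegral_comp_comm hBi
    exact h.symm
  have hformc : ∀ x : Fin n → ℝ, Continuous fun s => (B s *ᵥ x) ⬝ᵥ x := by
    intro x
    let L : Matrix (Fin n) (Fin n) ℝ →ₗ[ℝ] ℝ :=
      { toFun := fun M => (M *ᵥ x) ⬝ᵥ x
        map_add' := fun M N => by simp [Matrix.add_mulVec, add_dotProduct]
        map_smul' := fun c M => by simp [Matrix.smul_mulVec, smul_dotProduct] }
    exact (LinearMap.toContinuousLinearMap L).continuous.comp hBc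
  -- (2) positivity
  have hposA : ∀ x : Fin n → ℝ, x ≠ 0 → 0 < (A *ᵥ x) ⬝ᵥ x := by
    intro x hx
    rw [hform x]
    refine intervalIntegral.intervalIntegral_pos_of_pos_on
      ((hformc x).intervalIntegrable _ _) ?_ ht
    intro s hs
    exact hBpos s (Set.mem_Icc_of_Ioo hs) x hx
  refine ⟨hsymA, hposA, ?_⟩
  -- (3) the norm bound
  set g : ℝ → ℝ := fun s => (matrixOpNorm ((B s)⁻¹))⁻¹ with hg
  set c : ℝ := ∫ s in t₀..t₁, g s with hc
  have hBPD : ∀ s ∈ Set.Icc t₀ t₁, (B s).PosDef := by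
    intro s hs
    refine Matrix.posDef_iff_dotProduct_mulVec.2 ⟨by rw [Matrix.IsHermitian, Matrix.conjTranspose_eq_transpose_of_trivial,
      hBsym s hs], ?_⟩
    intro y hy
    rw [show star y = y from rfl, dotProduct_comm]
    exact hBpos s hs y hy
  have hBU : ∀ s ∈ Set.Icc t₀ t₁, IsUnit (B s) := fun s hs => (hBPD s hs).isUnit
  have hdet : ∀ s ∈ Set.Icc t₀ t₁, (B s).det ≠ 0 := by
    intro s hs
    exact (Matrix.isUnit_iff_isUnit_det _ |>.1 (hBU s hs)).ne_zero
  have hinvc : ContinuousOn (fun s => (B s)⁻¹) (Set.Icc t₀ t₁) := by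
    have h1 : ContinuousOn (fun s => (B s).det⁻¹ • (B s).adjugate) (Set.Icc t₀ t₁) :=
      ((hBc.matrix_det.continuousOn).inv₀ hdet).smul hBc.matrix_adjugate.continuousOn
    refine h1.congr ?_
    intro s _
    show (B s)⁻¹ = (B s).det⁻¹ • (B s).adjugate
    rw [Matrix.inv_def, Ring.inverse_eq_inv']
  have hgpos : ∀ s ∈ Set.Icc t₀ t₁, 0 < g s := by
    intro s hs
    have : IsUnit (B s)⁻¹ := (hBPD s hs).inv.isUnit
    exact inv_pos.2 (matrixOpNorm_pos hn this)
  have hgc : ContinuousOn g (Set.Icc t₀ t₁) := by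
    refine ContinuousOn.inv₀ (continuous_matrixOpNorm.comp_continuousOn hinvc) ?_
    intro s hs
    exact (matrixOpNorm_pos hn ((hBPD s hs).inv.isUnit)).ne'
  have hgi : IntervalIntegrable g MeasureTheory.volume t₀ t₁ :=
    ContinuousOn.intervalIntegrable (by rwa [hIcc])
  have hcpos : 0 < c :=
    intervalIntegral.intervalIntegral_pos_of_pos_on hgi
      (fun s hs => hgpos s (Set.mem_Icc_of_Ioo hs)) ht
  -- key inequality
  have hkey : ∀ x : Fin n → ℝ, c * (x ⬝ᵥ x) ≤ (A *ᵥ x) ⬝ᵥ x := by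
    intro x
    rw [hform x]
    have h1 : (∫ s in t₀..t₁, g s * (x ⬝ᵥ x)) ≤ ∫ s in t₀..t₁, (B s *ᵥ x) ⬝ᵥ x := by
      refine intervalIntegral.integral_mono_on ht.le (hgi.mul_const _)
        ((hformc x).intervalIntegrable _ _) ?_
      intro s hs
      exact key_pointwise (hBsym s hs) (hBpos s hs) x
    rwa [intervalIntegral.integral_mul_const] at h1
  -- A is invertible
  have hAPD : A.PosDef := by
    refine Matrix.posDef_iff_dotProduct_mulVec.2 ⟨by rw [Matrix.IsHermitian, Matrix.conjTranspose_eq_transpose_of_trivial, hsymA], ?_⟩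
    intro y hy
    rw [show star y = y from rfl, dotProduct_comm]
    exact hposA y hy
  have hAU : IsUnit A := hAPD.isUnit
  -- conclude
  show ‖Matrix.toEuclideanCLM (𝕜 := ℝ) A⁻¹‖ ≤ c⁻¹
  refine ContinuousLinearMap.opNorm_le_bound _ (by positivity) ?_
  intro y
  set x : Fin n → ℝ := WithLp.equiv 2 (Fin n → ℝ) y with hxdef
  have hy : y = e x := rfl
  rw [hy, eCLM]
  set u : Fin n → ℝ := A⁻¹ *ᵥ x with hu
  have hAu : A *ᵥ u = x := by
    rw [hu, Matrix.mulVec_mulVec,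
      Matrix.mul_nonsing_inv _ (Matrix.isUnit_iff_isUnit_det _ |>.1 hAU), Matrix.one_mulVec]
  show ‖e u‖ ≤ c⁻¹ * ‖e x‖
  rcases eq_or_lt_of_le (norm_nonneg (e (n := n) u)) with h0 | h0
  · rw [← h0]
    positivity
  · have h1 : c * (u ⬝ᵥ u) ≤ (A *ᵥ u) ⬝ᵥ u := hkey u
    rw [hAu] at h1
    have h3 : x ⬝ᵥ u ≤ ‖e x‖ * ‖e u‖ := by
      rw [dot_eq_inner]
      exact real_inner_le_norm _ _
    have h4 : u ⬝ᵥ u = ‖e (n := n) u‖ ^ 2 := dot_self u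
    have h5 : c * ‖e u‖ ≤ ‖e x‖ := by nlinarith
    have h6 := mul_le_mul_of_nonneg_left h5 (inv_nonneg.mpr hcpos.le)
    rwa [← mul_assoc, inv_mul_cancel₀ hcpos.ne', one_mul] at h6
end

section
/- Let n ≥ 1, let R : ℝ → Matrix (Fin n) (Fin n) ℝ be continuous with R(t) symmetric for every t, and let α ≥ 1. Let U and S be Lagrangian Jacobi solutions along R with U(0) = S(0) = 1 such that, for every u ≥ 0 and every x ∈ ℝⁿ, U(u) and S(u) are invertible, ‖S(u) x‖ ≤ α ‖x‖ and ‖U(u) x‖ ≥ ‖x‖ / α. Let t > 0 and let S_t be the Jacobi solution along R with S_t(0) = 1 and S_t(t) = 0. Then for every x ∈ ℝⁿ with (U'(0) − S'(0)) x = 0, one has (1 / (α² t)) ⟨x, x⟩ ≤ ⟨(U'(0) − S_t'(0)) x, x⟩ ≤ (α² / t) ⟨x, x⟩. -/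
open Matrix MeasureTheory

attribute [local instance] Matrix.normedAddCommGroup Matrix.normedSpace

/-- The Euclidean norm on `ℝⁿ`. -/
noncomputable def euclNorm {n : ℕ} (x : Fin n → ℝ) : ℝ :=
  Real.sqrt (x ⬝ᵥ x)

noncomputable instance matENormedAddMonoid {n : ℕ} : ENormedAddMonoid (Matrix (Fin n) (Fin n) ℝ) :=
  NormedAddCommGroup.toENormedAddCommMonoid.toENormedAddMonoid

section RankAux

variable {n : ℕ}

local notation "Mat" => Matrix (Fin n) (Fin n) ℝ

noncomputable def entryL (i j : Fin n) : Mat →L[ℝ] ℝ :=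
  LinearMap.toContinuousLinearMap
    { toFun := fun A => A i j, map_add' := by intros; rfl, map_smul' := by intros; rfl }

noncomputable def transL : Mat →L[ℝ] Mat :=
  LinearMap.toContinuousLinearMap
    { toFun := fun A => Aᵀ, map_add' := by intros; rfl, map_smul' := by intros; rfl }

noncomputable def mulL : Mat →L[ℝ] Mat →L[ℝ] Mat :=
  LinearMap.toContinuousLinearMap
  { toFun := fun A => LinearMap.toContinuousLinearMap
      { toFun := fun B => A * B, map_add' := by intro B C; exact Matrix.mul_add A B C,
        map_smul' := by intro r B; exact Matrix.mul_smul A r B }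
    map_add' := by intro A B; ext C : 1; exact Matrix.add_mul A B C
    map_smul' := by intro r A; ext C : 1; exact Matrix.smul_mul r A C }

noncomputable def qL (z w : Fin n → ℝ) : Mat →L[ℝ] ℝ :=
  LinearMap.toContinuousLinearMap
    { toFun := fun A => (A *ᵥ z) ⬝ᵥ w,
      map_add' := by intro A B; simp [Matrix.add_mulVec, add_dotProduct],
      map_smul' := by intro r A; simp [Matrix.smul_mulVec, smul_dotProduct] }

lemma HasDerivAt.matmul {f g : ℝ → Mat} {f' g' : Mat} {u : ℝ}
    (hf : HasDerivAt f f' u) (hg : HasDerivAt g g' u) :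
    HasDerivAt (fun s => f s * g s) (f' * g u + f u * g') u := by
  have := (mulL.isBoundedBilinearMap.hasFDerivAt (f u, g u)).comp_hasDerivAt u (hf.prodMk hg)
  convert this using 1
  show f' * g u + f u * g' = mulL (f u) g' + mulL f' (g u)
  exact add_comm _ _
  all_goals rfl

lemma HasDerivAt.mattrans {f : ℝ → Mat} {f' : Mat} {u : ℝ} (hf : HasDerivAt f f' u) :
    HasDerivAt (fun s => (f s)ᵀ) f'ᵀ u :=
  ((transL.hasFDerivAt.comp_hasDerivAt u hf) : )

lemma DifferentiableAt.entry {f : ℝ → Mat} {u : ℝ} (hf : DifferentiableAt ℝ f u)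
    (i j : Fin n) : DifferentiableAt ℝ (fun s => f s i j) u :=
  ((entryL i j).differentiableAt.comp u hf : )

lemma DifferentiableAt.matrix_of_entries {f : ℝ → Mat} {u : ℝ}
    (hf : ∀ i j, DifferentiableAt ℝ (fun s => f s i j) u) : DifferentiableAt ℝ f u := by
  have h1 : ∀ s, (∑ i : Fin n, ∑ j : Fin n, (f s i j) • (Matrix.single i j (1:ℝ)))
      = f s := by
    intro s
    conv_rhs => rw [Matrix.matrix_eq_sum_single (f s)]
    congr 1; funext i; congr 1; funext j
    rw [Matrix.smul_single]; norm_num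
  have hg : DifferentiableAt ℝ
      (fun s => ∑ i : Fin n, ∑ j : Fin n, (f s i j) • (Matrix.single i j (1:ℝ))) u := by
    apply DifferentiableAt.fun_sum; intro i _
    apply DifferentiableAt.fun_sum; intro j _
    exact (hf i j).smul_const _
  exact hg.congr_of_eventuallyEq (Filter.Eventually.of_forall fun s => (h1 s).symm)

lemma DifferentiableAt.matdet {f : ℝ → Mat} {u : ℝ} (hf : DifferentiableAt ℝ f u) :
    DifferentiableAt ℝ (fun s => (f s).det) u := by
  have : (fun s => (f s).det) =
      fun s => ∑ σ : Equiv.Perm (Fin n), (Equiv.Perm.sign σ : ℝ) * ∏ i, f s (σ i) i := by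
    funext s; rw [Matrix.det_apply]
    congr 1; funext σ
    rw [Units.smul_def, zsmul_eq_mul]
  rw [this]
  apply DifferentiableAt.fun_sum; intro σ _
  exact ((DifferentiableAt.fun_finsetProd (u := Finset.univ)
    (fun i _ => hf.entry (σ i) i)).const_mul _ : )

lemma DifferentiableAt.matadj {f : ℝ → Mat} {u : ℝ} (hf : DifferentiableAt ℝ f u) :
    DifferentiableAt ℝ (fun s => (f s).adjugate) u := by
  apply DifferentiableAt.matrix_of_entries
  intro i j
  have : (fun s => (f s).adjugate i j) = fun s => ((f s).updateRow j (Pi.single i 1)).det := by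
    funext s; rw [Matrix.adjugate_apply]
  rw [this]
  apply DifferentiableAt.matdet
  apply DifferentiableAt.matrix_of_entries
  intro k l
  by_cases hk : k = j
  · subst hk; simp only [Matrix.updateRow_apply, if_pos rfl]
    exact differentiableAt_const _
  · simp only [Matrix.updateRow_apply, hk, if_false]
    exact hf.entry k l

lemma DifferentiableAt.matinv {f : ℝ → Mat} {u : ℝ} (hf : DifferentiableAt ℝ f u)
    (hdet : (f u).det ≠ 0) : DifferentiableAt ℝ (fun s => (f s)⁻¹) u := by
  have : (fun s => (f s)⁻¹) = fun s => ((f s).det)⁻¹ • (f s).adjugate := by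
    funext s; rw [Matrix.inv_def]; simp [Ring.inverse_eq_inv']
  rw [this]
  exact (hf.matdet.inv hdet).smul hf.matadj

lemma ContDiff2.deriv_differentiable {f : ℝ → Mat} (h : ContDiff ℝ 2 f) :
    Differentiable ℝ (deriv f) := by
  have h2 : ContDiff ℝ (1+1) f := by norm_num at h ⊢; exact h
  exact ((contDiff_succ_iff_deriv.mp h2).2.2.differentiable (by norm_num))

/-- Core identity: `(∫₀ᵗ (YᵀY)⁻¹) * (Y'(0) − St'(0)) = 1`. -/
lemma core_identity {R Y St : ℝ → Mat} (hRsym : ∀ u, (R u)ᵀ = R u)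
    (hY : IsJacobi R Y) (hYL : IsLagrangian Y) (hY0 : Y 0 = 1)
    (hYinv : ∀ u, 0 ≤ u → IsUnit (Y u))
    {t : ℝ} (ht : 0 < t)
    (hSt : IsJacobi R St) (hSt0 : St 0 = 1) (hStt : St t = 0) :
    (∫ u in (0:ℝ)..t, ((Y u)ᵀ * Y u)⁻¹) * (deriv Y 0 - deriv St 0) = 1 := by
  have hYdiff : Differentiable ℝ Y := hY.1.differentiable (by norm_num)
  have hStdiff : Differentiable ℝ St := hSt.1.differentiable (by norm_num)
  have hY'diff : Differentiable ℝ (deriv Y) := ContDiff2.deriv_differentiable hY.1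
  have hSt'diff : Differentiable ℝ (deriv St) := ContDiff2.deriv_differentiable hSt.1
  have hYd : ∀ u, HasDerivAt Y (deriv Y u) u := fun u => (hYdiff u).hasDerivAt
  have hStd : ∀ u, HasDerivAt St (deriv St u) u := fun u => (hStdiff u).hasDerivAt
  have hY'd : ∀ u, HasDerivAt (deriv Y) (deriv (deriv Y) u) u := fun u => (hY'diff u).hasDerivAt
  have hSt'd : ∀ u, HasDerivAt (deriv St) (deriv (deriv St) u) u :=
    fun u => (hSt'diff u).hasDerivAt
  set W : ℝ → Mat := fun u => (Y u)ᵀ * deriv St u - (deriv Y u)ᵀ * St u with hWdef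
  have hWd : ∀ u, HasDerivAt W 0 u := by
    intro u
    have h1 := (hYd u).mattrans.matmul (hSt'd u)
    have h2 := (hY'd u).mattrans.matmul (hStd u)
    have h3 := h1.sub h2
    refine h3.congr_deriv ?_
    have e1 : deriv (deriv St) u = -(R u * St u) := eq_neg_of_add_eq_zero_left (hSt.2 u)
    have e2 : deriv (deriv Y) u = -(R u * Y u) := eq_neg_of_add_eq_zero_left (hY.2 u)
    rw [e1, e2, Matrix.transpose_neg, Matrix.transpose_mul, hRsym u]
    rw [Matrix.mul_neg, Matrix.neg_mul, Matrix.mul_assoc]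
    abel
  have hWconst : ∀ u, W u = W 0 :=
    fun u => is_const_of_deriv_eq_zero
      (fun v => (hWd v).differentiableAt) (fun v => (hWd v).deriv) u 0
  have hsym0 : (deriv Y 0)ᵀ = deriv Y 0 := by
    have := hYL 0
    rwa [hY0, Matrix.transpose_one, mul_one, one_mul] at this
  set K : Mat := deriv St 0 - deriv Y 0 with hKdef
  have hWK : ∀ u, W u = K := by
    intro u
    rw [hWconst u, hWdef]
    simp only [hY0, hSt0, Matrix.transpose_one, one_mul, mul_one, hsym0, hKdef]
  set O : Set ℝ := {u : ℝ | (Y u).det ≠ 0} with hOdef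
  have hO : IsOpen O := by
    have hcont : Continuous fun u => (Y u).det := hYdiff.continuous.matrix_det
    exact isOpen_compl_singleton.preimage hcont
  have hsub : Set.uIcc (0:ℝ) t ⊆ O := by
    intro u hu
    rw [Set.uIcc_of_le ht.le] at hu
    have : IsUnit (Y u) := hYinv u hu.1
    have := (Matrix.isUnit_iff_isUnit_det _).mp this
    exact this.ne_zero
  set G : ℝ → Mat := fun u => ((Y u)ᵀ * Y u)⁻¹ with hGdef
  have hGdiffAt : ∀ u ∈ O, DifferentiableAt ℝ G u := by
    intro u hu
    have h1 : DifferentiableAt ℝ (fun s => (Y s)ᵀ * Y s) u :=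
      ((hYd u).mattrans.matmul (hYd u)).differentiableAt
    apply h1.matinv
    rw [Matrix.det_mul, Matrix.det_transpose]
    exact mul_ne_zero hu hu
  set Z : ℝ → Mat := fun u => (Y u)⁻¹ * St u with hZdef
  have hZd : ∀ u ∈ O, HasDerivAt Z (G u * K) u := by
    intro u hu
    have hdet : IsUnit (Y u).det := isUnit_iff_ne_zero.mpr hu
    have hdetT : IsUnit ((Y u)ᵀ).det := by rwa [Matrix.det_transpose]
    have hIdiff : DifferentiableAt ℝ (fun s => (Y s)⁻¹) u :=
      (hYdiff u).matinv hu
    obtain ⟨V, hV⟩ : ∃ V, HasDerivAt (fun s => (Y s)⁻¹) V u := ⟨_, hIdiff.hasDerivAt⟩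
    have hprod : HasDerivAt (fun s => (Y s)⁻¹ * Y s) (V * Y u + (Y u)⁻¹ * deriv Y u) u :=
      hV.matmul (hYd u)
    have hone : (fun s => (Y s)⁻¹ * Y s) =ᶠ[nhds u] (fun _ => (1:Mat)) := by
      filter_upwards [hO.mem_nhds hu] with v hv
      exact Matrix.nonsing_inv_mul _ (isUnit_iff_ne_zero.mpr hv)
    have huniq : V * Y u + (Y u)⁻¹ * deriv Y u = 0 := by
      have h1 : HasDerivAt (fun _ => (1:Mat)) (V * Y u + (Y u)⁻¹ * deriv Y u) u :=
        hprod.congr_of_eventuallyEq hone.symm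
      exact h1.unique (hasDerivAt_const u 1)
    have hA : Y u * (Y u)⁻¹ = 1 := Matrix.mul_nonsing_inv _ hdet
    have hAT : ((Y u)ᵀ)⁻¹ * (Y u)ᵀ = 1 := Matrix.nonsing_inv_mul _ hdetT
    have hVeq : V = -((Y u)⁻¹ * deriv Y u * (Y u)⁻¹) := by
      have h2 : V * Y u = -((Y u)⁻¹ * deriv Y u) := by
        rw [add_eq_zero_iff_eq_neg] at huniq; exact huniq
      calc V = V * (Y u * (Y u)⁻¹) := by rw [hA, mul_one]
        _ = (V * Y u) * (Y u)⁻¹ := by rw [mul_assoc]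
        _ = -((Y u)⁻¹ * deriv Y u * (Y u)⁻¹) := by rw [h2, neg_mul]
    have hZ1 : HasDerivAt Z (V * St u + (Y u)⁻¹ * deriv St u) u := hV.matmul (hStd u)
    have key : V * St u + (Y u)⁻¹ * deriv St u = G u * K := by
      have e : ((Y u)ᵀ)⁻¹ * (deriv Y u)ᵀ = deriv Y u * (Y u)⁻¹ := by
        calc ((Y u)ᵀ)⁻¹ * (deriv Y u)ᵀ
            = ((Y u)ᵀ)⁻¹ * (deriv Y u)ᵀ * (Y u * (Y u)⁻¹) := by rw [hA, mul_one]
          _ = ((Y u)ᵀ)⁻¹ * ((deriv Y u)ᵀ * Y u) * (Y u)⁻¹ := by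
              rw [mul_assoc, mul_assoc, mul_assoc]
          _ = ((Y u)ᵀ)⁻¹ * ((Y u)ᵀ * deriv Y u) * (Y u)⁻¹ := by rw [hYL u]
          _ = (((Y u)ᵀ)⁻¹ * (Y u)ᵀ) * (deriv Y u * (Y u)⁻¹) := by
              rw [mul_assoc, mul_assoc, mul_assoc]
          _ = deriv Y u * (Y u)⁻¹ := by rw [hAT, one_mul]
      have hGu : G u = (Y u)⁻¹ * ((Y u)ᵀ)⁻¹ := by rw [hGdef]; exact Matrix.mul_inv_rev _ _
      have hKu : K = (Y u)ᵀ * deriv St u - (deriv Y u)ᵀ * St u := (hWK u).symm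
      rw [hGu, hKu, hVeq, mul_sub]
      have r1 : (Y u)⁻¹ * ((Y u)ᵀ)⁻¹ * ((Y u)ᵀ * deriv St u) = (Y u)⁻¹ * deriv St u := by
        rw [mul_assoc, ← mul_assoc (((Y u)ᵀ)⁻¹), hAT, one_mul]
      have r2 : (Y u)⁻¹ * ((Y u)ᵀ)⁻¹ * ((deriv Y u)ᵀ * St u)
          = (Y u)⁻¹ * (deriv Y u * ((Y u)⁻¹ * St u)) := by
        rw [mul_assoc, ← mul_assoc (((Y u)ᵀ)⁻¹), e, mul_assoc]
      rw [r1, r2]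
      simp only [neg_mul, mul_assoc]
      abel
    rw [← key]
    exact hZ1
  have hZd' : ∀ u ∈ Set.uIcc (0:ℝ) t, HasDerivAt Z (G u * K) u := fun u hu => hZd u (hsub hu)
  have hGKcont : ContinuousOn (fun u => G u * K) (Set.uIcc (0:ℝ) t) := by
    intro u hu
    exact (((hGdiffAt u (hsub hu)).hasDerivAt.matmul
      (hasDerivAt_const u K))).differentiableAt.continuousAt.continuousWithinAt
  have hGcont : ContinuousOn G (Set.uIcc (0:ℝ) t) := fun u hu =>
    (hGdiffAt u (hsub hu)).continuousAt.continuousWithinAt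
  have hGKint : IntervalIntegrable (fun u => G u * K) volume 0 t := hGKcont.intervalIntegrable
  have hGint : IntervalIntegrable G volume 0 t := hGcont.intervalIntegrable
  have hFTC : ∫ u in (0:ℝ)..t, G u * K = Z t - Z 0 :=
    intervalIntegral.integral_eq_sub_of_hasDerivAt hZd' hGKint
  have hZt : Z t = 0 := by rw [hZdef]; simp [hStt]
  have hZ0 : Z 0 = 1 := by rw [hZdef]; simp [hY0, hSt0]
  have hcomm : ∫ u in (0:ℝ)..t, G u * K = (∫ u in (0:ℝ)..t, G u) * K := by
    have := (mulL.flip K).intervalIntegral_comp_comm hGint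
    exact this
  have hmain : (∫ u in (0:ℝ)..t, G u) * K = -1 := by
    rw [← hcomm, hFTC, hZt, hZ0]; simp
  have : deriv Y 0 - deriv St 0 = -K := by rw [hKdef, neg_sub]
  rw [this, mul_neg, hmain, neg_neg]

lemma G_continuousOn {Y : ℝ → Mat} (hY2 : ContDiff ℝ 2 Y)
    (hYinv : ∀ u, 0 ≤ u → IsUnit (Y u)) {t : ℝ} (ht : 0 < t) :
    ContinuousOn (fun u => ((Y u)ᵀ * Y u)⁻¹) (Set.uIcc 0 t) := by
  intro u hu
  rw [Set.uIcc_of_le ht.le] at hu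
  have hYdiff : Differentiable ℝ Y := hY2.differentiable (by norm_num)
  have h1 : DifferentiableAt ℝ (fun s => (Y s)ᵀ * Y s) u :=
    (((hYdiff u).hasDerivAt.mattrans).matmul (hYdiff u).hasDerivAt).differentiableAt
  have hdet : (Y u).det ≠ 0 := ((Matrix.isUnit_iff_isUnit_det _).mp (hYinv u hu.1)).ne_zero
  have hd2 : ((Y u)ᵀ * Y u).det ≠ 0 := by
    rw [Matrix.det_mul, Matrix.det_transpose]; exact mul_ne_zero hdet hdet
  exact ((h1.matinv hd2).continuousAt).continuousWithinAt

lemma dot_self_nonneg (p : Fin n → ℝ) : 0 ≤ p ⬝ᵥ p :=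
  Finset.sum_nonneg fun i _ => mul_self_nonneg _

lemma dot_sq_le (p q : Fin n → ℝ) : (p ⬝ᵥ q)^2 ≤ (p ⬝ᵥ p) * (q ⬝ᵥ q) := by
  have h : ∀ s : ℝ, 0 ≤ (q ⬝ᵥ q) * (s * s) + (2 * (p ⬝ᵥ q)) * s + (p ⬝ᵥ p) := by
    intro s
    have h0 := dot_self_nonneg (p + s • q)
    have : (p + s • q) ⬝ᵥ (p + s • q)
        = (q ⬝ᵥ q) * (s * s) + (2 * (p ⬝ᵥ q)) * s + (p ⬝ᵥ p) := by
      simp [add_dotProduct, dotProduct_add, smul_dotProduct, dotProduct_smul,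
        dotProduct_comm q p, smul_eq_mul]
      ring
    linarith [this ▸ h0]
  have := discrim_le_zero h
  rw [discrim] at this
  nlinarith

lemma mulVec_dot_swap (C : Mat) (z w : Fin n → ℝ) :
    (C *ᵥ z) ⬝ᵥ w = z ⬝ᵥ (Cᵀ *ᵥ w) := by
  rw [dotProduct_comm, Matrix.dotProduct_mulVec, Matrix.mulVec_transpose, dotProduct_comm]

lemma form_CS (C : Mat) (hsym : ∀ z w, (C *ᵥ z) ⬝ᵥ w = (C *ᵥ w) ⬝ᵥ z)
    (hpsd : ∀ z, 0 ≤ (C *ᵥ z) ⬝ᵥ z) (z w : Fin n → ℝ) :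
    ((C *ᵥ z) ⬝ᵥ w)^2 ≤ ((C *ᵥ z) ⬝ᵥ z) * ((C *ᵥ w) ⬝ᵥ w) := by
  have h : ∀ s : ℝ, 0 ≤ ((C *ᵥ w) ⬝ᵥ w) * (s * s) + (2 * ((C *ᵥ z) ⬝ᵥ w)) * s
      + ((C *ᵥ z) ⬝ᵥ z) := by
    intro s
    have h0 := hpsd (z + s • w)
    have : (C *ᵥ (z + s • w)) ⬝ᵥ (z + s • w)
        = ((C *ᵥ w) ⬝ᵥ w) * (s * s) + (2 * ((C *ᵥ z) ⬝ᵥ w)) * s + ((C *ᵥ z) ⬝ᵥ z) := by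
      rw [Matrix.mulVec_add, Matrix.mulVec_smul]
      simp [add_dotProduct, dotProduct_add, smul_dotProduct, dotProduct_smul, smul_eq_mul,
        hsym w z]
      ring
    linarith [this ▸ h0]
  have := discrim_le_zero h
  rw [discrim] at this
  nlinarith

lemma sq_of_euclNorm_le {x y : Fin n → ℝ} {c : ℝ} (hc : 0 ≤ c)
    (h : euclNorm x ≤ c * euclNorm y) : x ⬝ᵥ x ≤ c^2 * (y ⬝ᵥ y) := by
  have h1 : Real.sqrt (x ⬝ᵥ x) ≤ c * Real.sqrt (y ⬝ᵥ y) := h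
  have h2 : x ⬝ᵥ x = (Real.sqrt (x ⬝ᵥ x))^2 := (Real.sq_sqrt (dot_self_nonneg x)).symm
  have h3 : y ⬝ᵥ y = (Real.sqrt (y ⬝ᵥ y))^2 := (Real.sq_sqrt (dot_self_nonneg y)).symm
  rw [h2, h3]
  have := Real.sqrt_nonneg (x ⬝ᵥ x)
  nlinarith [Real.sqrt_nonneg (y ⬝ᵥ y)]

lemma transpose_dot_bound (a : Mat) {c : ℝ} (hc : 0 ≤ c)
    (h : ∀ w, (a *ᵥ w) ⬝ᵥ (a *ᵥ w) ≤ c * (w ⬝ᵥ w)) (z : Fin n → ℝ) :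
    (aᵀ *ᵥ z) ⬝ᵥ (aᵀ *ᵥ z) ≤ c * (z ⬝ᵥ z) := by
  set p := aᵀ *ᵥ z with hp
  have hv : p ⬝ᵥ p = z ⬝ᵥ (a *ᵥ p) := by
    rw [hp, Matrix.mulVec_transpose, Matrix.dotProduct_mulVec]
  have hcs : (z ⬝ᵥ (a *ᵥ p))^2 ≤ (z ⬝ᵥ z) * ((a *ᵥ p) ⬝ᵥ (a *ᵥ p)) := dot_sq_le _ _
  have hb := h p
  have hz := dot_self_nonneg z
  have hpp := dot_self_nonneg p
  rcases eq_or_lt_of_le hpp with h0 | h0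
  · rw [← h0]; positivity
  · nlinarith [hv ▸ hcs]

lemma G_dot (a : Mat) (h : IsUnit a.det) (z : Fin n → ℝ) :
    ((aᵀ * a)⁻¹ *ᵥ z) ⬝ᵥ z = ((aᵀ)⁻¹ *ᵥ z) ⬝ᵥ ((aᵀ)⁻¹ *ᵥ z) := by
  rw [Matrix.mul_inv_rev, ← Matrix.mulVec_mulVec, mulVec_dot_swap,
    Matrix.transpose_nonsing_inv, dotProduct_comm]

lemma integral_dot {f : ℝ → Mat} {a b : ℝ} (hf : IntervalIntegrable f volume a b)
    (z w : Fin n → ℝ) :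
    ((∫ u in a..b, f u) *ᵥ z) ⬝ᵥ w = ∫ u in a..b, (f u *ᵥ z) ⬝ᵥ w := by
  have := ((qL z w).intervalIntegral_comp_comm hf).symm
  exact this

end RankAux
/-- For an `α`-stable pair of stable/unstable Lagrangian Jacobi solutions `S`, `U`
and `x ∈ ker(U'(0) − S'(0))`, one has
`⟨x,x⟩/(α² t) ≤ ⟨(U'(0) − S_t'(0))x, x⟩ ≤ (α²/t)⟨x,x⟩`. -/
theorem rank_kernel_two_sided_bound {n : ℕ} (hn : 1 ≤ n)
    (R : ℝ → Matrix (Fin n) (Fin n) ℝ) (hRc : Continuous R)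
    (hRsym : ∀ t : ℝ, (R t)ᵀ = R t)
    (α : ℝ) (hα : 1 ≤ α)
    (U S : ℝ → Matrix (Fin n) (Fin n) ℝ)
    (hU : IsJacobi R U) (hUL : IsLagrangian U) (hU0 : U 0 = 1)
    (hS : IsJacobi R S) (hSL : IsLagrangian S) (hS0 : S 0 = 1)
    (hUinv : ∀ u : ℝ, 0 ≤ u → IsUnit (U u))
    (hSinv : ∀ u : ℝ, 0 ≤ u → IsUnit (S u))
    (hSup : ∀ u : ℝ, 0 ≤ u → ∀ x : Fin n → ℝ, euclNorm (S u *ᵥ x) ≤ α * euclNorm x)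
    (hUlow : ∀ u : ℝ, 0 ≤ u → ∀ x : Fin n → ℝ, euclNorm x / α ≤ euclNorm (U u *ᵥ x))
    (t : ℝ) (ht : 0 < t)
    (St : ℝ → Matrix (Fin n) (Fin n) ℝ)
    (hSt : IsJacobi R St) (hSt0 : St 0 = 1) (hStt : St t = 0) :
    ∀ x : Fin n → ℝ, (deriv U 0 - deriv S 0) *ᵥ x = 0 →
      (1 / (α ^ 2 * t)) * (x ⬝ᵥ x) ≤ ((deriv U 0 - deriv St 0) *ᵥ x) ⬝ᵥ x ∧
      ((deriv U 0 - deriv St 0) *ᵥ x) ⬝ᵥ x ≤ (α ^ 2 / t) * (x ⬝ᵥ x) := by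
  intro x hker
  have hα0 : (0:ℝ) < α := lt_of_lt_of_le one_pos hα
  have hα2 : (0:ℝ) < α ^ 2 := by positivity
  have hIcc : Set.uIcc (0:ℝ) t = Set.Icc 0 t := Set.uIcc_of_le ht.le
  set GU : ℝ → Matrix (Fin n) (Fin n) ℝ := fun u => ((U u)ᵀ * U u)⁻¹ with hGUdef
  set GS : ℝ → Matrix (Fin n) (Fin n) ℝ := fun u => ((S u)ᵀ * S u)⁻¹ with hGSdef
  have hGUcont : ContinuousOn GU (Set.uIcc 0 t) := G_continuousOn hU.1 hUinv ht
  have hGScont : ContinuousOn GS (Set.uIcc 0 t) := G_continuousOn hS.1 hSinv ht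
  have hGUint : IntervalIntegrable GU volume 0 t := hGUcont.intervalIntegrable
  have hGSint : IntervalIntegrable GS volume 0 t := hGScont.intervalIntegrable
  set BU := ∫ u in (0:ℝ)..t, GU u with hBUdef
  set BS := ∫ u in (0:ℝ)..t, GS u with hBSdef
  have hBU : BU * (deriv U 0 - deriv St 0) = 1 :=
    core_identity hRsym hU hUL hU0 hUinv ht hSt hSt0 hStt
  have hBS : BS * (deriv S 0 - deriv St 0) = 1 :=
    core_identity hRsym hS hSL hS0 hSinv ht hSt hSt0 hStt
  set y := (deriv U 0 - deriv St 0) *ᵥ x with hydef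
  have hySt : (deriv S 0 - deriv St 0) *ᵥ x = y := by
    have hsplit : deriv U 0 - deriv St 0
        = (deriv U 0 - deriv S 0) + (deriv S 0 - deriv St 0) := by abel
    rw [hydef, hsplit, Matrix.add_mulVec, hker, zero_add]
  have hBUy : BU *ᵥ y = x := by
    rw [hydef, Matrix.mulVec_mulVec, hBU, Matrix.one_mulVec]
  have hBSy : BS *ᵥ y = x := by
    rw [← hySt, Matrix.mulVec_mulVec, hBS, Matrix.one_mulVec]
  -- squared norm bounds
  have hUlow2 : ∀ u ∈ Set.Icc (0:ℝ) t, ∀ w : Fin n → ℝ,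
      ((U u)⁻¹ *ᵥ w) ⬝ᵥ ((U u)⁻¹ *ᵥ w) ≤ α^2 * (w ⬝ᵥ w) := by
    intro u hu w
    have hdet : IsUnit (U u).det := (Matrix.isUnit_iff_isUnit_det _).mp (hUinv u hu.1)
    have h1 := hUlow u hu.1 ((U u)⁻¹ *ᵥ w)
    rw [Matrix.mulVec_mulVec, Matrix.mul_nonsing_inv _ hdet, Matrix.one_mulVec] at h1
    have h2 : euclNorm ((U u)⁻¹ *ᵥ w) ≤ α * euclNorm w := by
      rw [div_le_iff₀ hα0] at h1
      calc euclNorm ((U u)⁻¹ *ᵥ w) ≤ euclNorm w * α := h1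
        _ = α * euclNorm w := mul_comm _ _
    exact sq_of_euclNorm_le hα0.le h2
  have hSup2 : ∀ u ∈ Set.Icc (0:ℝ) t, ∀ w : Fin n → ℝ,
      (S u *ᵥ w) ⬝ᵥ (S u *ᵥ w) ≤ α^2 * (w ⬝ᵥ w) :=
    fun u hu w => sq_of_euclNorm_le hα0.le (hSup u hu.1 w)
  -- pointwise quadratic bounds
  have hGUpt : ∀ u ∈ Set.Icc (0:ℝ) t, ∀ z : Fin n → ℝ,
      0 ≤ (GU u *ᵥ z) ⬝ᵥ z ∧ (GU u *ᵥ z) ⬝ᵥ z ≤ α^2 * (z ⬝ᵥ z) := by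
    intro u hu z
    have hdet : IsUnit (U u).det := (Matrix.isUnit_iff_isUnit_det _).mp (hUinv u hu.1)
    have hgd : (GU u *ᵥ z) ⬝ᵥ z = (((U u)ᵀ)⁻¹ *ᵥ z) ⬝ᵥ (((U u)ᵀ)⁻¹ *ᵥ z) := G_dot (U u) hdet z
    constructor
    · rw [hgd]; exact dot_self_nonneg _
    · rw [hgd, ← Matrix.transpose_nonsing_inv]
      exact transpose_dot_bound ((U u)⁻¹) hα2.le (hUlow2 u hu) z
  have hGSpt : ∀ u ∈ Set.Icc (0:ℝ) t, ∀ z : Fin n → ℝ,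
      (z ⬝ᵥ z) / α^2 ≤ (GS u *ᵥ z) ⬝ᵥ z := by
    intro u hu z
    have hdet : IsUnit (S u).det := (Matrix.isUnit_iff_isUnit_det _).mp (hSinv u hu.1)
    have hdetT : IsUnit ((S u)ᵀ).det := by rwa [Matrix.det_transpose]
    have hgd : (GS u *ᵥ z) ⬝ᵥ z = (((S u)ᵀ)⁻¹ *ᵥ z) ⬝ᵥ (((S u)ᵀ)⁻¹ *ᵥ z) := G_dot (S u) hdet z
    set p := ((S u)ᵀ)⁻¹ *ᵥ z with hpdef
    have hz : (S u)ᵀ *ᵥ p = z := by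
      rw [hpdef, Matrix.mulVec_mulVec, Matrix.mul_nonsing_inv _ hdetT, Matrix.one_mulVec]
    have hb : ((S u)ᵀ *ᵥ p) ⬝ᵥ ((S u)ᵀ *ᵥ p) ≤ α^2 * (p ⬝ᵥ p) :=
      transpose_dot_bound (S u) hα2.le (hSup2 u hu) p
    rw [hz] at hb
    rw [hgd, div_le_iff₀ hα2]
    linarith [hb]
  -- integral representations
  have hrepU : ∀ z w : Fin n → ℝ, (BU *ᵥ z) ⬝ᵥ w = ∫ u in (0:ℝ)..t, (GU u *ᵥ z) ⬝ᵥ w :=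
    fun z w => integral_dot hGUint z w
  have hrepS : ∀ z w : Fin n → ℝ, (BS *ᵥ z) ⬝ᵥ w = ∫ u in (0:ℝ)..t, (GS u *ᵥ z) ⬝ᵥ w :=
    fun z w => integral_dot hGSint z w
  have hGsymm : ∀ (A : Matrix (Fin n) (Fin n) ℝ), ((Aᵀ * A)⁻¹)ᵀ = (Aᵀ * A)⁻¹ := by
    intro A
    rw [Matrix.transpose_nonsing_inv, Matrix.transpose_mul, Matrix.transpose_transpose]
  have hsymU : ∀ z w : Fin n → ℝ, (BU *ᵥ z) ⬝ᵥ w = (BU *ᵥ w) ⬝ᵥ z := by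
    intro z w
    rw [hrepU, hrepU]
    apply intervalIntegral.integral_congr
    intro u _
    show (GU u *ᵥ z) ⬝ᵥ w = (GU u *ᵥ w) ⬝ᵥ z
    have h1 : (GU u)ᵀ = GU u := by simp only [hGUdef]; exact hGsymm (U u)
    rw [mulVec_dot_swap, h1, dotProduct_comm]
  have hpsdU : ∀ z : Fin n → ℝ, 0 ≤ (BU *ᵥ z) ⬝ᵥ z := by
    intro z
    rw [hrepU]
    apply intervalIntegral.integral_nonneg ht.le
    intro u hu
    exact (hGUpt u hu z).1
  -- integral bounds
  have hintq : ∀ z w : Fin n → ℝ, IntervalIntegrable (fun u => (GU u *ᵥ z) ⬝ᵥ w) volume 0 t :=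
    fun z w => ((qL z w).continuous.comp_continuousOn hGUcont).intervalIntegrable
  have hintqS : ∀ z w : Fin n → ℝ, IntervalIntegrable (fun u => (GS u *ᵥ z) ⬝ᵥ w) volume 0 t :=
    fun z w => ((qL z w).continuous.comp_continuousOn hGScont).intervalIntegrable
  have hqUxx : (BU *ᵥ x) ⬝ᵥ x ≤ α^2 * (t * (x ⬝ᵥ x)) := by
    rw [hrepU]
    have hm := intervalIntegral.integral_mono_on ht.le (hintq x x)
      (intervalIntegrable_const (c := α^2 * (x ⬝ᵥ x))) (fun u hu => (hGUpt u hu x).2)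
    simpa using hm
  have hqSyy : t * (y ⬝ᵥ y) / α^2 ≤ (BS *ᵥ y) ⬝ᵥ y := by
    rw [hrepS]
    have hm := intervalIntegral.integral_mono_on ht.le
      (intervalIntegrable_const (c := (y ⬝ᵥ y) / α^2)) (hintqS y y) (fun u hu => hGSpt u hu y)
    simpa using hm
  -- Cauchy–Schwarz
  have hcs : ((BU *ᵥ y) ⬝ᵥ x)^2 ≤ ((BU *ᵥ y) ⬝ᵥ y) * ((BU *ᵥ x) ⬝ᵥ x) :=
    form_CS BU hsymU hpsdU y x
  rw [hBUy] at hcs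
  rw [dotProduct_comm x y] at hcs
  have hQ0 : 0 ≤ y ⬝ᵥ x := by
    have h3 := hpsdU y
    rw [hBUy] at h3
    rwa [dotProduct_comm] at h3
  have hqS : t * (y ⬝ᵥ y) ≤ (y ⬝ᵥ x) * α^2 := by
    rw [hBSy] at hqSyy
    rw [dotProduct_comm x y] at hqSyy
    rwa [div_le_iff₀ hα2] at hqSyy
  have hxx0 : 0 ≤ x ⬝ᵥ x := dot_self_nonneg x
  have hyy0 : 0 ≤ y ⬝ᵥ y := dot_self_nonneg y
  have hcs2 : (y ⬝ᵥ x)^2 ≤ (y ⬝ᵥ y) * (x ⬝ᵥ x) := dot_sq_le y x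
  constructor
  · -- lower bound
    rw [one_div, inv_mul_le_iff₀ (by positivity)]
    rcases eq_or_lt_of_le hxx0 with h0 | h0
    · calc x ⬝ᵥ x = 0 := h0.symm
        _ ≤ α^2 * t * (y ⬝ᵥ x) := by positivity
    · nlinarith [mul_le_mul_of_nonneg_left hqUxx hQ0]
  · -- upper bound
    rw [div_mul_eq_mul_div, le_div_iff₀ ht]
    rcases eq_or_lt_of_le hQ0 with h0 | h0
    · calc (y ⬝ᵥ x) * t = 0 := by rw [← h0, zero_mul]
        _ ≤ α^2 * (x ⬝ᵥ x) := by positivity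
    · nlinarith [mul_le_mul_of_nonneg_left hcs2 ht.le,
        mul_le_mul_of_nonneg_right hqS hxx0, mul_pos h0 ht]
end

section
/- Let X be a metric space, δ ≥ 0, p ∈ X, and a, a₁, a₂ ≥ 0. Let c : [0, a] → X, c₁ : [0, a₁] → X, and c₂ : [0, a₂] → X be geodesics with c₁(0) = c₂(0) = p, c₁(a₁) = c(0), and c₂(a₂) = c(a). Assume the triangle is δ-thin along c, i.e., for every t ∈ [0, a] the distance from c(t) to the set c₁([0, a₁]) ∪ c₂([0, a₂]) is at most δ. Then there exist t₀ ∈ [0, a], t₁ ∈ [0, a₁], and t₂ ∈ [0, a₂] such that d(c₁(t₁), c(t₀)) = d(c₂(t₂), c(t₀)) ≤ δ. -/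
open Metric

/-- In a geodesic triangle with vertex `p` that is `δ`-thin along the side `c`,
there is a point of `c` equidistant (with distance at most `δ`) from the
two other sides. -/
theorem thin_triangle_equidistant_point {X : Type*} [MetricSpace X]
    (δ : ℝ) (hδ : 0 ≤ δ) (p : X)
    (a a₁ a₂ : ℝ) (ha : 0 ≤ a) (ha₁ : 0 ≤ a₁) (ha₂ : 0 ≤ a₂)
    (c c₁ c₂ : ℝ → X)
    (hc : ∀ s ∈ Set.Icc (0 : ℝ) a, ∀ t ∈ Set.Icc (0 : ℝ) a, dist (c s) (c t) = |s - t|)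
    (hc₁ : ∀ s ∈ Set.Icc (0 : ℝ) a₁, ∀ t ∈ Set.Icc (0 : ℝ) a₁, dist (c₁ s) (c₁ t) = |s - t|)
    (hc₂ : ∀ s ∈ Set.Icc (0 : ℝ) a₂, ∀ t ∈ Set.Icc (0 : ℝ) a₂, dist (c₂ s) (c₂ t) = |s - t|)
    (hp₁ : c₁ 0 = p) (hp₂ : c₂ 0 = p)
    (he₁ : c₁ a₁ = c 0) (he₂ : c₂ a₂ = c a)
    (hthin : ∀ t ∈ Set.Icc (0 : ℝ) a,
      infDist (c t) (c₁ '' Set.Icc (0 : ℝ) a₁ ∪ c₂ '' Set.Icc (0 : ℝ) a₂) ≤ δ) :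
    ∃ t₀ ∈ Set.Icc (0 : ℝ) a, ∃ t₁ ∈ Set.Icc (0 : ℝ) a₁, ∃ t₂ ∈ Set.Icc (0 : ℝ) a₂,
      dist (c₁ t₁) (c t₀) = dist (c₂ t₂) (c t₀) ∧ dist (c₁ t₁) (c t₀) ≤ δ := by
  set S₁ := c₁ '' Set.Icc (0 : ℝ) a₁ with hS₁
  set S₂ := c₂ '' Set.Icc (0 : ℝ) a₂ with hS₂
  have hne₁ : S₁.Nonempty := ⟨c₁ 0, ⟨0, ⟨le_refl _, ha₁⟩, rfl⟩⟩
  have hne₂ : S₂.Nonempty := ⟨c₂ 0, ⟨0, ⟨le_refl _, ha₂⟩, rfl⟩⟩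
  -- continuity of geodesics on their intervals
  have lip : ∀ (b : ℝ) (g : ℝ → X),
      (∀ s ∈ Set.Icc (0 : ℝ) b, ∀ t ∈ Set.Icc (0 : ℝ) b, dist (g s) (g t) = |s - t|) →
      ContinuousOn g (Set.Icc 0 b) := by
    intro b g hg
    have : LipschitzOnWith 1 g (Set.Icc 0 b) := by
      rw [lipschitzOnWith_iff_dist_le_mul]
      intro s hs t ht
      rw [hg s hs t ht]
      simp [Real.dist_eq]
    exact this.continuousOn
  have hcomp₁ : IsCompact S₁ :=
    isCompact_Icc.image_of_continuousOn (lip a₁ c₁ hc₁)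
  have hcomp₂ : IsCompact S₂ :=
    isCompact_Icc.image_of_continuousOn (lip a₂ c₂ hc₂)
  -- intermediate value theorem for f t = infDist (c t) S₁ - infDist (c t) S₂
  set f : ℝ → ℝ := fun t => infDist (c t) S₁ - infDist (c t) S₂ with hf
  have hfcont : ContinuousOn f (Set.Icc 0 a) :=
    ((continuous_infDist_pt S₁).comp_continuousOn (lip a c hc)).sub
      ((continuous_infDist_pt S₂).comp_continuousOn (lip a c hc))
  have hf0 : f 0 ≤ 0 := by
    have h1 : infDist (c 0) S₁ = 0 := by
      apply infDist_zero_of_mem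
      exact ⟨a₁, ⟨ha₁, le_refl _⟩, he₁⟩
    simp [hf, h1, infDist_nonneg]
  have hfa : 0 ≤ f a := by
    have h2 : infDist (c a) S₂ = 0 := by
      apply infDist_zero_of_mem
      exact ⟨a₂, ⟨ha₂, le_refl _⟩, he₂⟩
    simp [hf, h2, infDist_nonneg]
  have : (0 : ℝ) ∈ f '' Set.Icc 0 a :=
    intermediate_value_Icc ha hfcont ⟨hf0, hfa⟩
  obtain ⟨t₀, ht₀, hft₀⟩ := this
  have heq : infDist (c t₀) S₁ = infDist (c t₀) S₂ := by
    have := sub_eq_zero.mp hft₀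
    linarith [hft₀, (sub_eq_zero.mp hft₀)]
  obtain ⟨y₁, hy₁, hd₁⟩ := hcomp₁.exists_infDist_eq_dist hne₁ (c t₀)
  obtain ⟨y₂, hy₂, hd₂⟩ := hcomp₂.exists_infDist_eq_dist hne₂ (c t₀)
  obtain ⟨t₁, ht₁, rfl⟩ := hy₁
  obtain ⟨t₂, ht₂, rfl⟩ := hy₂
  refine ⟨t₀, ht₀, t₁, ht₁, t₂, ht₂, ?_, ?_⟩
  · rw [dist_comm, ← hd₁, heq, hd₂, dist_comm]
  · have hth := hthin t₀ ht₀
    have hunion : infDist (c t₀) (S₁ ∪ S₂) = min (infDist (c t₀) S₁) (infDist (c t₀) S₂) := by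
      simp only [infDist, EMetric.infEdist_union]
      rw [ENNReal.toReal_min (Metric.infEdist_ne_top hne₁) (Metric.infEdist_ne_top hne₂)]
    rw [hunion, heq, min_self] at hth
    rw [dist_comm, ← hd₁]
    rw [heq]; exact hth
end

section
/- Let X be a metric space, δ ≥ 0, and set ℓ := δ + 1. Let c₁, c₂ : ℝ → X be geodesics with c₁(0) = c₂(0) = p, satisfying d(c₁(ℓ), c₂(−ℓ)) ≤ 1 and d(c₁(−ℓ), c₂(ℓ)) ≤ 1. Let a₁, a₂ > ℓ, let a ≥ 0, and let c : [0, a] → X be a geodesic with c(0) = c₁(a₁) and c(a) = c₂(a₂). Assume that for every t ∈ [0, a] the distance from c(t) to the set c₁([0, a₁]) ∪ c₂([0, a₂]) is at most δ. Then there exists t₀ ∈ [0, a] such that d(p, c(t₀)) ≤ 2δ + 1. -/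
open Metric

/-- In a space where the given triangle is `δ`-thin, a geodesic joining points far
out on two nearly opposite rays through `p` passes within `2δ + 1` of `p`. -/
theorem geodesic_passes_near_center {X : Type*} [MetricSpace X]
    (δ : ℝ) (hδ : 0 ≤ δ) (p : X)
    (c₁ c₂ : ℝ → X)
    (hc₁ : ∀ a b : ℝ, dist (c₁ a) (c₁ b) = |a - b|)
    (hc₂ : ∀ a b : ℝ, dist (c₂ a) (c₂ b) = |a - b|)
    (hp₁ : c₁ 0 = p) (hp₂ : c₂ 0 = p)
    (hd₁ : dist (c₁ (δ + 1)) (c₂ (-(δ + 1))) ≤ 1)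
    (hd₂ : dist (c₁ (-(δ + 1))) (c₂ (δ + 1)) ≤ 1)
    (a₁ a₂ : ℝ) (ha₁ : δ + 1 < a₁) (ha₂ : δ + 1 < a₂)
    (a : ℝ) (ha : 0 ≤ a)
    (c : ℝ → X)
    (hc : ∀ s ∈ Set.Icc (0 : ℝ) a, ∀ t ∈ Set.Icc (0 : ℝ) a, dist (c s) (c t) = |s - t|)
    (hstart : c 0 = c₁ a₁) (hend : c a = c₂ a₂)
    (hthin : ∀ t ∈ Set.Icc (0 : ℝ) a,
      infDist (c t) (c₁ '' Set.Icc (0 : ℝ) a₁ ∪ c₂ '' Set.Icc (0 : ℝ) a₂) ≤ δ) :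
    ∃ t₀ ∈ Set.Icc (0 : ℝ) a, dist p (c t₀) ≤ 2 * δ + 1 := by
  set A := c₁ '' Set.Icc (0 : ℝ) a₁ with hA
  set B := c₂ '' Set.Icc (0 : ℝ) a₂ with hB
  have ha₁0 : (0:ℝ) ≤ a₁ := le_of_lt (lt_of_le_of_lt (by linarith) ha₁)
  have ha₂0 : (0:ℝ) ≤ a₂ := le_of_lt (lt_of_le_of_lt (by linarith) ha₂)
  have hAne : A.Nonempty := ⟨c₁ 0, Set.mem_image_of_mem _ ⟨le_refl _, ha₁0⟩⟩
  have hBne : B.Nonempty := ⟨c₂ 0, Set.mem_image_of_mem _ ⟨le_refl _, ha₂0⟩⟩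
  -- continuity of c on [0,a]
  have hlip : LipschitzOnWith 1 c (Set.Icc (0:ℝ) a) := by
    apply LipschitzOnWith.of_dist_le_mul
    intro x hx y hy
    rw [hc x hx y hy, NNReal.coe_one, one_mul, Real.dist_eq]
  have hccont : ContinuousOn c (Set.Icc (0:ℝ) a) := hlip.continuousOn
  -- IVT on f - g
  set F : ℝ → ℝ := fun t => infDist (c t) A - infDist (c t) B with hF
  have hFcont : ContinuousOn F (Set.Icc (0:ℝ) a) :=
    ((continuous_infDist_pt A).comp_continuousOn hccont).sub
      ((continuous_infDist_pt B).comp_continuousOn hccont)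
  have hF0 : F 0 ≤ 0 := by
    have : infDist (c 0) A = 0 := by
      rw [hstart]
      exact infDist_zero_of_mem (Set.mem_image_of_mem _ ⟨ha₁0, le_refl _⟩)
    simp [hF, this, infDist_nonneg]
  have hFa : 0 ≤ F a := by
    have : infDist (c a) B = 0 := by
      rw [hend]
      exact infDist_zero_of_mem (Set.mem_image_of_mem _ ⟨ha₂0, le_refl _⟩)
    simp [hF, this, infDist_nonneg]
  obtain ⟨t₀, ht₀, hFt₀⟩ := intermediate_value_Icc ha hFcont ⟨hF0, hFa⟩
  refine ⟨t₀, ht₀, ?_⟩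
  have heq : infDist (c t₀) A = infDist (c t₀) B := by
    have := hFt₀; simp only [hF] at this; linarith
  -- both infDists are < δ + 1/4
  have hthin' := hthin t₀ ht₀
  have hlt : infDist (c t₀) A < δ + 4⁻¹ ∧ infDist (c t₀) B < δ + 4⁻¹ := by
    have h14 : (0:ℝ) < 4⁻¹ := by norm_num
    have : infDist (c t₀) (A ∪ B) < δ + 4⁻¹ := lt_of_le_of_lt hthin' (by linarith)
    obtain ⟨y, hy, hdy⟩ := (infDist_lt_iff (hAne.mono Set.subset_union_left)).1 this
    rcases hy with hy | hy
    · have h1 : infDist (c t₀) A < δ + 4⁻¹ := lt_of_le_of_lt (infDist_le_dist_of_mem hy) hdy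
      exact ⟨h1, heq ▸ h1⟩
    · have h1 : infDist (c t₀) B < δ + 4⁻¹ := lt_of_le_of_lt (infDist_le_dist_of_mem hy) hdy
      exact ⟨heq ▸ h1, h1⟩
  obtain ⟨y, ⟨s, hs, rfl⟩, hys⟩ := (infDist_lt_iff hAne).1 hlt.1
  obtain ⟨z, ⟨u, hu, rfl⟩, hzu⟩ := (infDist_lt_iff hBne).1 hlt.2
  -- distance between the two witnesses
  have hD : dist (c₁ s) (c₂ u) ≤ 2*δ + 2⁻¹ := by
    calc dist (c₁ s) (c₂ u) ≤ dist (c₁ s) (c t₀) + dist (c t₀) (c₂ u) :=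
          dist_triangle _ _ _
      _ ≤ 2*δ + 2⁻¹ := by rw [dist_comm (c₁ s)]; linarith
  have hIA : u + (δ + 1) ≤ dist (c₁ s) (c₂ u) + |s - (δ + 1)| + 1 := by
    have := dist_triangle4 (c₂ u) (c₁ s) (c₁ (δ+1)) (c₂ (-(δ+1)))
    rw [dist_comm (c₂ u) (c₁ s), hc₁ s (δ+1), hc₂ u (-(δ+1))] at this
    have habs : |u - -(δ+1)| = u + (δ+1) := by
      rw [abs_of_nonneg]; ring; nlinarith [hu.1]
    rw [habs] at this; linarith
  have hIB : s + (δ + 1) ≤ dist (c₁ s) (c₂ u) + |u - (δ + 1)| + 1 := by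
    have := dist_triangle4 (c₁ s) (c₂ u) (c₂ (δ+1)) (c₁ (-(δ+1)))
    rw [hc₂ u (δ+1), hc₁ s (-(δ+1)), dist_comm (c₂ (δ+1)) (c₁ (-(δ+1)))] at this
    have habs : |s - -(δ+1)| = s + (δ+1) := by
      rw [abs_of_nonneg]; ring; nlinarith [hs.1]
    rw [habs] at this; linarith
  -- one of s, u is small
  have hsmall : s ≤ δ + 3/4 ∨ u ≤ δ + 3/4 := by
    rcases le_total s (δ+1) with h1 | h1
    · rw [abs_of_nonpos (by linarith)] at hIA
      rcases le_total s u with h2 | h2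
      · left; linarith
      · right; linarith
    · rw [abs_of_nonneg (by linarith)] at hIA
      rcases le_total u (δ+1) with h2 | h2
      · rw [abs_of_nonpos (by linarith)] at hIB
        rcases le_total s u with h3 | h3
        · left; linarith
        · right; linarith
      · rw [abs_of_nonneg (by linarith)] at hIB
        exfalso; linarith
  rcases hsmall with h | h
  · have hps : dist p (c₁ s) = s := by
      rw [← hp₁, hc₁, abs_of_nonpos (by linarith [hs.1])]; ring
    calc dist p (c t₀) ≤ dist p (c₁ s) + dist (c₁ s) (c t₀) := dist_triangle _ _ _
      _ ≤ 2*δ + 1 := by rw [hps, dist_comm]; linarith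
  · have hpu : dist p (c₂ u) = u := by
      rw [← hp₂, hc₂, abs_of_nonpos (by linarith [hu.1])]; ring
    calc dist p (c t₀) ≤ dist p (c₂ u) + dist (c₂ u) (c t₀) := dist_triangle _ _ _
      _ ≤ 2*δ + 1 := by rw [hpu, dist_comm]; linarith
end
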